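/- arXiv:2203.04859 — 5 statements merged into one kernel-verified Lean document; each statement's English description precedes it below -/
import Mathlib

section
/- Let d ≥ 1 and for each j = 1,…,d let α_j, β_j ∈ ℝ satisfy −π < α_j < β_j ≤ π and 0 < β_j − α_j < π/2. Let Γ_j = {z ∈ ℂ : z ≠ 0 and α_j ≤ Arg z ≤ β_j} ∪ {0}, put Ω = Γ_1 × ⋯ × Γ_d ⊆ ℂ^d, let Ω° = {z : z_j ≠ 0 and α_j < Arg z_j < β_j for all j} be its interior, and let Ω_0 = {z ∈ ℂ^d : z_j ≠ 0 and Arg z_j ∈ {α_j, β_j} for all j} be its distinguished boundary. Let F : ℂ^d → ℂ be holomorphic on Ω° and continuous on Ω. If there are constants r_0, M > 0 and C > 0 such that |F(z)| ≤ C·e^{r_0 |z|²} for all z ∈ Ω and |F(z)| ≤ M for all z ∈ Ω_0, then |F(z)| ≤ M for all z ∈ Ω. -/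
open Complex Set Filter


open Complex Set Filter

namespace PLAux

lemma argExp (w : ℂ) (h1 : -Real.pi < w.im) (h2 : w.im ≤ Real.pi) :
    (Complex.exp w).arg = w.im := by
  conv_lhs => rw [← Complex.re_add_im w]
  rw [Complex.exp_add, ← Complex.ofReal_exp, Complex.arg_real_mul _ (Real.exp_pos _),
    Complex.exp_mul_I]
  exact Complex.arg_cos_add_sin_mul_I ⟨h1, h2⟩

lemma argAux (r θ : ℝ) (hr : 0 < r) (h1 : -Real.pi < θ) (h2 : θ ≤ Real.pi) :
    ((r : ℂ) * Complex.exp (θ * I)).arg = θ := by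
  rw [Complex.arg_real_mul _ hr]
  have h : ((θ : ℂ) * I).im = θ := by simp
  rw [argExp _ (by rw [h]; exact h1) (by rw [h]; exact h2), h]

lemma absAux (r θ : ℝ) (hr : 0 ≤ r) : ‖(r : ℂ) * Complex.exp (θ * I)‖ = r := by
  simp [Complex.norm_exp, _root_.abs_of_nonneg hr]

lemma isOpen_sector {a b : ℝ} (ha : -Real.pi < a) (hb : b ≤ Real.pi) :
    IsOpen {t : ℂ | t ≠ 0 ∧ a < t.arg ∧ t.arg < b} := by
  rw [isOpen_iff_mem_nhds]
  rintro t ⟨ht0, hta, htb⟩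
  have hsp : t ∈ Complex.slitPlane := by
    rw [Complex.mem_slitPlane_iff]
    by_contra h
    push_neg at h
    have hre : t.re < 0 := by
      rcases lt_or_eq_of_le h.1 with h' | h'
      · exact h'
      · exact absurd (Complex.ext (by simp [h']) (by simp [h.2])) ht0
    have h1 : t.arg = Real.pi := Complex.arg_eq_pi_iff.mpr ⟨hre, h.2⟩
    have h2 : t.arg < Real.pi := lt_of_lt_of_le htb hb
    linarith
  have harg := Complex.continuousAt_arg hsp
  refine Filter.mem_of_superset
    (Filter.inter_mem (compl_singleton_mem_nhds ht0)
      (harg.preimage_mem_nhds (Ioo_mem_nhds hta htb))) ?_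
  rintro s ⟨h1, h2⟩
  exact ⟨h1, h2.1, h2.2⟩

/-- One-dimensional Phragmén–Lindelöf on a sector of opening `< π/2` with a
Gaussian a priori bound. -/
lemma sectorPL {a b r₀ C M : ℝ} (ha : -Real.pi < a) (hab : a < b) (hb : b ≤ Real.pi)
    (hop : b - a < Real.pi / 2) (hr₀ : 0 ≤ r₀) (g : ℂ → ℂ)
    (hd : DifferentiableOn ℂ g {t : ℂ | t ≠ 0 ∧ a < t.arg ∧ t.arg < b})
    (hcont : ContinuousOn g {t : ℂ | t ≠ 0 ∧ a ≤ t.arg ∧ t.arg ≤ b})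
    (hgrow : ∀ t : ℂ, t ≠ 0 → a ≤ t.arg → t.arg ≤ b → ‖g t‖ ≤ C * Real.exp (r₀ * ‖t‖ ^ 2))
    (hbd : ∀ t : ℂ, t ≠ 0 → (t.arg = a ∨ t.arg = b) → ‖g t‖ ≤ M)
    {t : ℂ} (ht : t ≠ 0) (h1 : a ≤ t.arg) (h2 : t.arg ≤ b) : ‖g t‖ ≤ M := by
  have haπ : a ≤ Real.pi := le_trans (le_of_lt hab) hb
  have hexp : ∀ w : ℂ, a ≤ w.im → w.im ≤ b → (Complex.exp w).arg = w.im := fun w hwa hwb =>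
    argExp w (lt_of_lt_of_le ha hwa) (hwb.trans hb)
  have key : ∀ w : ℂ, a ≤ w.im → w.im ≤ b → ‖g (Complex.exp w)‖ ≤ M := by
    intro w hwa hwb
    refine PhragmenLindelof.horizontal_strip (f := fun w => g (Complex.exp w))
      (a := a) (b := b) ?_ ?_ ?_ ?_ hwa hwb
    · constructor
      · exact hd.comp Complex.differentiable_exp.differentiableOn (fun v hv =>
          ⟨Complex.exp_ne_zero v, by rw [hexp v hv.1.le hv.2.le]; exact hv.1, by
            rw [hexp v hv.1.le hv.2.le]; exact hv.2⟩)
      · have hsub : closure (Complex.im ⁻¹' Ioo a b) ⊆ Complex.im ⁻¹' Icc a b := by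
          refine (Complex.continuous_im.closure_preimage_subset _).trans ?_
          rw [closure_Ioo hab.ne]
        exact (hcont.comp Complex.continuous_exp.continuousOn (fun v hv =>
          ⟨Complex.exp_ne_zero v, by rw [hexp v hv.1 hv.2]; exact hv.1, by
            rw [hexp v hv.1 hv.2]; exact hv.2⟩)).mono hsub
    · refine ⟨2, ?_, r₀, ?_⟩
      · have hba : 0 < b - a := by linarith
        rw [lt_div_iff₀ hba]
        linarith
      · refine Asymptotics.IsBigO.of_bound C ?_
        rw [Filter.eventually_inf_principal]
        refine Filter.Eventually.of_forall ?_
        rintro v hv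
        have hb1 := hgrow (Complex.exp v) (Complex.exp_ne_zero v)
          (by rw [hexp v hv.1.le hv.2.le]; exact hv.1.le)
          (by rw [hexp v hv.1.le hv.2.le]; exact hv.2.le)
        have hb2 : ‖Complex.exp v‖ ^ 2 = Real.exp (2 * v.re) := by
          rw [Complex.norm_exp, sq, ← Real.exp_add]
          congr 1
          ring
        rw [hb2] at hb1
        show ‖g (Complex.exp v)‖ ≤ C * ‖Real.exp (r₀ * Real.exp (2 * |v.re|))‖
        refine hb1.trans ?_
        have h5 : Real.exp (r₀ * Real.exp (2 * v.re)) ≤ Real.exp (r₀ * Real.exp (2 * |v.re|)) :=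
          Real.exp_le_exp.2 (mul_le_mul_of_nonneg_left
            (Real.exp_le_exp.2 (by linarith [le_abs_self v.re])) hr₀)
        calc C * Real.exp (r₀ * Real.exp (2 * v.re))
            ≤ C * Real.exp (r₀ * Real.exp (2 * |v.re|)) := by
              rcases le_or_gt 0 C with hC | hC
              · exact mul_le_mul_of_nonneg_left h5 hC
              · nlinarith [Real.exp_pos (r₀ * Real.exp (2 * v.re)),
                  Real.exp_pos (r₀ * Real.exp (2 * |v.re|)),
                  (norm_nonneg (g (Complex.exp v))).trans hb1]
          _ = C * ‖Real.exp (r₀ * Real.exp (2 * |v.re|))‖ := by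
              rw [Real.norm_eq_abs, Real.abs_exp]
    · intro v hv
      refine hbd _ (Complex.exp_ne_zero v) (Or.inl ?_)
      rw [argExp v (by rw [hv]; linarith) (by rw [hv]; exact haπ), hv]
    · intro v hv
      refine hbd _ (Complex.exp_ne_zero v) (Or.inr ?_)
      rw [argExp v (by rw [hv]; linarith) (by rw [hv]; exact hb), hv]
  have h := key (Complex.log t) (by rw [Complex.log_im]; exact h1)
    (by rw [Complex.log_im]; exact h2)
  rwa [Complex.exp_log ht] at h

end PLAux

section Main

open PLAux

set_option maxHeartbeats 2000000 in
/-- **Phragmén–Lindelöf type estimate on a closed polysector** (Lemma A in the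
paper): a square-exponential a priori bound on the closed polysector `Ω`
together with the bound `M` on the distinguished boundary `Ω₀` gives the bound
`M` on all of `Ω`.  Each sector has opening strictly less than `π/2`. -/
theorem phragmen_lindelof_polysector_gaussian
    (d : ℕ) (hd : 1 ≤ d) (α β : Fin d → ℝ)
    (hα : ∀ j, -Real.pi < α j) (hαβ : ∀ j, α j < β j) (hβ : ∀ j, β j ≤ Real.pi)
    (hopening : ∀ j, β j - α j < Real.pi / 2)
    (Ω Ωint Ω₀ : Set (EuclideanSpace ℂ (Fin d)))
    (hΩ : Ω = {z | ∀ j, z j = 0 ∨ (α j ≤ (z j).arg ∧ (z j).arg ≤ β j)})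
    (hΩint : Ωint = {z | ∀ j, z j ≠ 0 ∧ α j < (z j).arg ∧ (z j).arg < β j})
    (hΩ₀ : Ω₀ = {z | ∀ j, z j ≠ 0 ∧ ((z j).arg = α j ∨ (z j).arg = β j)})
    (F : EuclideanSpace ℂ (Fin d) → ℂ)
    (hF₁ : DifferentiableOn ℂ F Ωint)
    (hF₂ : ContinuousOn F Ω)
    (r₀ M C : ℝ) (hr₀ : 0 < r₀) (hM : 0 < M) (hC : 0 < C)
    (hgrowth : ∀ z ∈ Ω, ‖F z‖ ≤ C * Real.exp (r₀ * ‖z‖ ^ 2))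
    (hbound : ∀ z ∈ Ω₀, ‖F z‖ ≤ M) :
    ∀ z ∈ Ω, ‖F z‖ ≤ M := by
  subst hΩ hΩint hΩ₀
  classical
  set γ : Fin d → ℝ := fun j => (α j + β j) / 2 with hγ
  have hγa : ∀ j, α j < γ j := fun j => by have := hαβ j; simp only [hγ]; linarith
  have hγb : ∀ j, γ j < β j := fun j => by have := hαβ j; simp only [hγ]; linarith
  have hγπ : ∀ j, -Real.pi < γ j ∧ γ j ≤ Real.pi := fun j =>
    ⟨lt_trans (hα j) (hγa j), le_trans (hγb j).le (hβ j)⟩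
  have main : ∀ k : ℕ, ∀ z : EuclideanSpace ℂ (Fin d),
      (∀ j, z j ≠ 0) → (∀ j, α j ≤ (z j).arg ∧ (z j).arg ≤ β j) →
      (∀ j : Fin d, k ≤ (j : ℕ) → ((z j).arg = α j ∨ (z j).arg = β j)) → ‖F z‖ ≤ M := by
    intro k
    induction k with
    | zero =>
      intro z hz0 hzc hzb
      exact hbound z (fun j => ⟨hz0 j, hzb j (Nat.zero_le _)⟩)
    | succ k ih =>
      intro z hz0 hzc hzb
      by_cases hkd : k < d
      case neg =>
        exact ih z hz0 hzc fun j hj =>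
          absurd j.isLt (not_lt.mpr (le_trans (not_lt.mp hkd) hj))
      case pos =>
      set jk : Fin d := ⟨k, hkd⟩ with hjk
      set e := EuclideanSpace.single jk (1 : ℂ) with he
      set p : ℂ → EuclideanSpace ℂ (Fin d) := fun t => z + (t - z jk) • e with hpdef
      have hpj : ∀ (t : ℂ) (j : Fin d), p t j = if j = jk then t else z j := by
        intro t j
        have h1 : p t j = z j + (t - z jk) * (if j = jk then 1 else 0) := by
          simp [hpdef, he, PiLp.add_apply, PiLp.smul_apply, EuclideanSpace.single_apply,
            smul_eq_mul]
        rw [h1]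
        by_cases h : j = jk
        · rw [h]; simp only [eq_self_iff_true, if_true]; ring
        · rw [if_neg h, if_neg h]; ring
      have hpz : p (z jk) = z := PiLp.ext fun j => by
        rw [hpj]
        by_cases h : j = jk
        · rw [h]; simp only [eq_self_iff_true, if_true]
        · rw [if_neg h]
      set δ : ℕ → ℝ := fun n => 1 / (n + 1) with hδdef
      have hδpos : ∀ n, 0 < δ n := fun n => by positivity
      have hδle : ∀ n, δ n ≤ 1 := fun n => by
        rw [hδdef]
        rw [div_le_one (by positivity)]
        push_cast
        linarith [Nat.cast_nonneg (α := ℝ) n]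
      set θ : ℕ → Fin d → ℝ := fun n j => (1 - δ n) * (z j).arg + δ n * γ j with hθdef
      have hθa : ∀ n j, α j < θ n j := by
        intro n j
        have h1 : 0 ≤ (1 - δ n) * ((z j).arg - α j) :=
          mul_nonneg (by linarith [hδle n]) (by linarith [(hzc j).1])
        have h2 : 0 < δ n * (γ j - α j) := mul_pos (hδpos n) (by linarith [hγa j])
        have h3 : θ n j - α j = (1 - δ n) * ((z j).arg - α j) + δ n * (γ j - α j) := by
          simp only [hθdef]; ring
        linarith
      have hθb : ∀ n j, θ n j < β j := by
        intro n j
        have h1 : 0 ≤ (1 - δ n) * (β j - (z j).arg) :=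
          mul_nonneg (by linarith [hδle n]) (by linarith [(hzc j).2])
        have h2 : 0 < δ n * (β j - γ j) := mul_pos (hδpos n) (by linarith [hγb j])
        have h3 : β j - θ n j = (1 - δ n) * (β j - (z j).arg) + δ n * (β j - γ j) := by
          simp only [hθdef]; ring
        linarith
      have hθπ : ∀ n j, -Real.pi < θ n j ∧ θ n j ≤ Real.pi := fun n j =>
        ⟨lt_trans (hα j) (hθa n j), le_trans (hθb n j).le (hβ j)⟩
      set w : ℕ → Fin d → ℂ := fun n j => (‖z j‖ : ℂ) * Complex.exp (θ n j * I)
        with hwdef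
      have habs : ∀ j, 0 < ‖z j‖ := fun j => norm_pos_iff.mpr (hz0 j)
      have hw0 : ∀ n j, w n j ≠ 0 := fun n j =>
        mul_ne_zero (by exact_mod_cast (habs j).ne') (Complex.exp_ne_zero _)
      have hwarg : ∀ n j, (w n j).arg = θ n j := fun n j =>
        PLAux.argAux _ _ (habs j) (hθπ n j).1 (hθπ n j).2
      have hwlim : ∀ j, Filter.Tendsto (fun n => w n j) Filter.atTop (nhds (z j)) := by
        intro j
        have hδ0 : Filter.Tendsto δ Filter.atTop (nhds 0) :=
          tendsto_one_div_add_atTop_nhds_zero_nat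
        have hθlim : Filter.Tendsto (fun n => θ n j) Filter.atTop (nhds ((z j).arg)) := by
          have h := ((tendsto_const_nhds (x := (1 : ℝ)).sub hδ0).mul
            (tendsto_const_nhds (x := (z j).arg))).add (hδ0.mul (tendsto_const_nhds (x := γ j)))
          simpa using h
        have hcont2 : Continuous fun s : ℝ => (‖z j‖ : ℂ) * Complex.exp (s * I) :=
          continuous_const.mul ((Complex.continuous_ofReal.mul continuous_const).cexp)
        have h := (hcont2.tendsto _).comp hθlim
        simp only [Complex.norm_mul_exp_arg_mul_I] at h; exact h
      set c : ℕ → EuclideanSpace ℂ (Fin d) := fun n =>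
        (PiLp.continuousLinearEquiv 2 ℂ (fun _ : Fin d => ℂ)).symm
          (fun j => if j = jk then 0 else w n j - z j) with hcdef
      have hcj : ∀ (n : ℕ) (j : Fin d), c n j = if j = jk then 0 else w n j - z j :=
        fun n j => rfl
      have hclim : Filter.Tendsto c Filter.atTop (nhds 0) := by
        have hpi : Filter.Tendsto
            (fun n => (fun j : Fin d => if j = jk then 0 else w n j - z j)) Filter.atTop
            (nhds (fun _ => 0)) := by
          rw [tendsto_pi_nhds]
          intro j
          by_cases h : j = jk
          · simp [h]
          · simp only [if_neg h]
            simpa using (hwlim j).sub (tendsto_const_nhds (x := z j))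
        have h := (((PiLp.continuousLinearEquiv 2 ℂ
          (fun _ : Fin d => ℂ)).symm.continuous.tendsto _).comp hpi)
        exact h
      set q : ℕ → ℂ → EuclideanSpace ℂ (Fin d) := fun n t => p t + c n with hqdef
      have hqj : ∀ (n : ℕ) (t : ℂ) (j : Fin d), q n t j = if j = jk then t else w n j := by
        intro n t j
        have h1 : q n t j = p t j + c n j := rfl
        rw [h1, hpj, hcj]
        by_cases h : j = jk <;> simp [h]
      set Sop := {t : ℂ | t ≠ 0 ∧ α jk < t.arg ∧ t.arg < β jk} with hSopdef
      have hSopen : IsOpen Sop := PLAux.isOpen_sector (hα jk) (hβ jk)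
      have hpdiff : Differentiable ℂ p :=
        (differentiable_const z).add ((differentiable_id.sub (differentiable_const _)).smul_const e)
      have hpcont : Continuous p := hpdiff.continuous
      have hqmaps : ∀ n, Set.MapsTo (q n) Sop
          {z : EuclideanSpace ℂ (Fin d) | ∀ j, z j ≠ 0 ∧ α j < (z j).arg ∧ (z j).arg < β j} := by
        intro n t ht j
        have hv := hqj n t j
        by_cases h : j = jk
        · rw [hv, if_pos h]
          subst h
          exact ⟨ht.1, ht.2.1, ht.2.2⟩
        · rw [hv, if_neg h]
          exact ⟨hw0 n j, by rw [hwarg]; exact hθa n j, by rw [hwarg]; exact hθb n j⟩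
      have hqdiffn : ∀ n, DifferentiableOn ℂ (fun t => F (q n t)) Sop := by
        intro n
        have hqd : Differentiable ℂ (q n) := fun t => ((hpdiff t).add_const (c n))
        exact hF₁.comp hqd.differentiableOn (hqmaps n)
      have hTLU : TendstoLocallyUniformlyOn (fun n t => F (q n t)) (fun t => F (p t))
          Filter.atTop Sop := by
        rw [tendstoLocallyUniformlyOn_iff_forall_isCompact hSopen]
        intro K hKsub hK
        rw [Metric.tendstoUniformlyOn_iff]
        intro ε hε
        set A : Fin d → Set ℂ := fun j =>
          (fun s : ℝ => (‖z j‖ : ℂ) * Complex.exp (s * I)) ''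
            Set.Icc (min (z j).arg (γ j)) (max (z j).arg (γ j)) with hA
        have hmm : ∀ (j : Fin d) (s : ℝ),
            s ∈ Set.Icc (min (z j).arg (γ j)) (max (z j).arg (γ j)) →
            α j ≤ s ∧ s ≤ β j := by
          intro j s hs
          exact ⟨le_trans (le_min (hzc j).1 (hγa j).le) hs.1,
            le_trans hs.2 (max_le (hzc j).2 (hγb j).le)⟩
        set L : Set (EuclideanSpace ℂ (Fin d)) :=
          (PiLp.continuousLinearEquiv 2 ℂ (fun _ : Fin d => ℂ)).symm ''
            Set.univ.pi (fun j => if j = jk then K else A j) with hL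
        have hAcomp : ∀ j, IsCompact (A j) := fun j => isCompact_Icc.image
          (continuous_const.mul ((Complex.continuous_ofReal.mul continuous_const).cexp))
        have hLcomp : IsCompact L := by
          refine IsCompact.image ?_ (PiLp.continuousLinearEquiv 2 ℂ
            (fun _ : Fin d => ℂ)).symm.continuous
          refine isCompact_univ_pi fun j => ?_
          by_cases h : j = jk
          · rw [if_pos h]; exact hK
          · rw [if_neg h]; exact hAcomp j
        have hAmem : ∀ (j : Fin d) (x : ℂ), x ∈ A j → x ≠ 0 ∧ α j ≤ x.arg ∧ x.arg ≤ β j := by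
          rintro j x ⟨s, hs, rfl⟩
          have hs' := hmm j s hs
          have harg := PLAux.argAux (‖z j‖) s (habs j)
            (lt_of_lt_of_le (hα j) hs'.1) (le_trans hs'.2 (hβ j))
          refine ⟨mul_ne_zero (by exact_mod_cast (habs j).ne') (Complex.exp_ne_zero _), ?_, ?_⟩
          · rw [harg]; exact hs'.1
          · rw [harg]; exact hs'.2
        have hLsub : L ⊆ {z : EuclideanSpace ℂ (Fin d) |
            ∀ j, z j = 0 ∨ (α j ≤ (z j).arg ∧ (z j).arg ≤ β j)} := by
          rintro x ⟨f, hf, rfl⟩ j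
          have hfj : ((PiLp.continuousLinearEquiv 2 ℂ
            (fun _ : Fin d => ℂ)).symm f) j = f j := rfl
          rw [hfj]
          have hmemT : f j ∈ (if j = jk then K else A j) := (Set.mem_univ_pi.mp hf) j
          by_cases h : j = jk
          · rw [if_pos h] at hmemT
            rw [h] at hmemT ⊢
            have h2 := hKsub hmemT
            exact Or.inr ⟨h2.2.1.le, h2.2.2.le⟩
          · rw [if_neg h] at hmemT
            exact Or.inr (hAmem j _ hmemT).2
        have hUC := hLcomp.uniformContinuousOn_of_continuous (hF₂.mono hLsub)
        rw [Metric.uniformContinuousOn_iff] at hUC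
        obtain ⟨δ', hδ'pos, hδ'⟩ := hUC ε hε
        have hev : ∀ᶠ n in Filter.atTop, ‖c n‖ < δ' := by
          filter_upwards [hclim (Metric.ball_mem_nhds (0 : EuclideanSpace ℂ (Fin d)) hδ'pos)]
            with n hn
          simpa [Metric.mem_ball, dist_zero_right] using hn
        have hmem' : ∀ g : Fin d → ℂ, (∀ j, g j ∈ (if j = jk then K else A j)) →
            (PiLp.continuousLinearEquiv 2 ℂ (fun _ : Fin d => ℂ)).symm g ∈ L :=
          fun g hg => ⟨g, Set.mem_univ_pi.mpr hg, rfl⟩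
        have hsymm : ∀ (g : Fin d → ℂ) (j : Fin d),
            ((PiLp.continuousLinearEquiv 2 ℂ (fun _ : Fin d => ℂ)).symm g) j = g j :=
          fun g j => rfl
        filter_upwards [hev] with n hn t htK
        have hzA : ∀ j : Fin d, z j ∈ A j :=
          fun j => ⟨(z j).arg, ⟨min_le_left _ _, le_max_left _ _⟩,
            Complex.norm_mul_exp_arg_mul_I (z j)⟩
        have hwA : ∀ j : Fin d, w n j ∈ A j := by
          intro j
          refine ⟨θ n j, ⟨?_, ?_⟩, rfl⟩
          · have h1 := min_le_left (z j).arg (γ j)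
            have h2 := min_le_right (z j).arg (γ j)
            have h3 := hδpos n
            have h4 := hδle n
            have h5 : θ n j = (1 - δ n) * (z j).arg + δ n * γ j := rfl
            nlinarith
          · have h1 := le_max_left (z j).arg (γ j)
            have h2 := le_max_right (z j).arg (γ j)
            have h3 := hδpos n
            have h4 := hδle n
            have h5 : θ n j = (1 - δ n) * (z j).arg + δ n * γ j := rfl
            nlinarith
        have hpmem : p t ∈ L := by
          have hpt : (PiLp.continuousLinearEquiv 2 ℂ (fun _ : Fin d => ℂ)).symm
              (fun j => if j = jk then t else z j) = p t := PiLp.ext fun j => by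
            rw [hsymm, hpj]
          rw [← hpt]
          refine hmem' _ fun j => ?_
          by_cases h : j = jk
          · rw [if_pos h, if_pos h]; exact htK
          · rw [if_neg h, if_neg h]; exact hzA j
        have hqmem : q n t ∈ L := by
          have hqt : (PiLp.continuousLinearEquiv 2 ℂ (fun _ : Fin d => ℂ)).symm
              (fun j => if j = jk then t else w n j) = q n t := PiLp.ext fun j => by
            rw [hsymm, hqj]
          rw [← hqt]
          refine hmem' _ fun j => ?_
          by_cases h : j = jk
          · rw [if_pos h, if_pos h]; exact htK
          · rw [if_neg h, if_neg h]; exact hwA j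
        have hdist : dist (p t) (q n t) < δ' := by
          have heq : dist (p t) (q n t) = ‖c n‖ := by
            have : q n t = p t + c n := rfl
            rw [this, dist_eq_norm]
            simp
          rw [heq]
          exact hn
        exact hδ' _ hpmem _ hqmem hdist
      have hGdiff : DifferentiableOn ℂ (fun t => F (p t)) Sop :=
        hTLU.differentiableOn (Filter.Eventually.of_forall hqdiffn) hSopen
      have hpmapsC : ∀ t : ℂ, t ≠ 0 → α jk ≤ t.arg → t.arg ≤ β jk →
          p t ∈ {z : EuclideanSpace ℂ (Fin d) |
            ∀ j, z j = 0 ∨ (α j ≤ (z j).arg ∧ (z j).arg ≤ β j)} := by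
        intro t ht0 hta htb j
        rw [hpj]
        by_cases h : j = jk
        · subst h
          simp only [if_pos rfl]
          exact Or.inr ⟨hta, htb⟩
        · simp only [if_neg h]
          exact Or.inr (hzc j)
      have hGcont : ContinuousOn (fun t => F (p t))
          {t : ℂ | t ≠ 0 ∧ α jk ≤ t.arg ∧ t.arg ≤ β jk} := by
        refine hF₂.comp hpcont.continuousOn ?_
        intro t ht
        exact hpmapsC t ht.1 ht.2.1 ht.2.2
      set C' := C * Real.exp (r₀ * ‖z‖ ^ 2) with hC'def
      have hGgrow : ∀ t : ℂ, t ≠ 0 → α jk ≤ t.arg → t.arg ≤ β jk →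
          ‖F (p t)‖ ≤ C' * Real.exp (r₀ * ‖t‖ ^ 2) := by
        intro t ht0 hta htb
        have hnorm : ‖p t‖ ^ 2 ≤ ‖t‖ ^ 2 + ‖z‖ ^ 2 := by
          have h1 : ‖p t‖ = Real.sqrt (∑ j, ‖p t j‖ ^ 2) := EuclideanSpace.norm_eq _
          have h2 : ‖z‖ = Real.sqrt (∑ j, ‖z j‖ ^ 2) := EuclideanSpace.norm_eq _
          have hsum : ∑ j, ‖p t j‖ ^ 2 ≤ ‖t‖ ^ 2 + ∑ j, ‖z j‖ ^ 2 := by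
            rw [← Finset.sum_erase_add Finset.univ _ (Finset.mem_univ jk)]
            have hjk2 : ‖p t jk‖ = ‖t‖ := by rw [hpj, if_pos rfl]
            have heq : ∀ j ∈ Finset.univ.erase jk, ‖p t j‖ ^ 2 = ‖z j‖ ^ 2 := by
              intro j hj
              rw [hpj, if_neg (Finset.mem_erase.mp hj).1]
            rw [Finset.sum_congr rfl heq, hjk2]
            have hle : ∑ j ∈ Finset.univ.erase jk, ‖z j‖ ^ 2 ≤ ∑ j, ‖z j‖ ^ 2 :=
              Finset.sum_le_sum_of_subset_of_nonneg (Finset.subset_univ _)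
                (fun j _ _ => sq_nonneg _)
            linarith
          have hnn : (0:ℝ) ≤ ∑ j, ‖p t j‖ ^ 2 := Finset.sum_nonneg fun j _ => sq_nonneg _
          have hnn2 : (0:ℝ) ≤ ∑ j, ‖z j‖ ^ 2 := Finset.sum_nonneg fun j _ => sq_nonneg _
          calc ‖p t‖ ^ 2 = ∑ j, ‖p t j‖ ^ 2 := by rw [h1, Real.sq_sqrt hnn]
            _ ≤ ‖t‖ ^ 2 + ∑ j, ‖z j‖ ^ 2 := hsum
            _ = ‖t‖ ^ 2 + ‖z‖ ^ 2 := by rw [h2, Real.sq_sqrt hnn2]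
        have hg := hgrowth (p t) (hpmapsC t ht0 hta htb)
        refine hg.trans ?_
        rw [hC'def, mul_assoc, ← Real.exp_add]
        refine mul_le_mul_of_nonneg_left (Real.exp_le_exp.2 ?_) hC.le
        nlinarith [hnorm, hr₀.le]
      have hGbd : ∀ t : ℂ, t ≠ 0 → (t.arg = α jk ∨ t.arg = β jk) → ‖F (p t)‖ ≤ M := by
        intro t ht0 htb'
        refine ih (p t) ?_ ?_ ?_
        · intro j
          rw [hpj]
          by_cases h : j = jk
          · simpa [h] using ht0
          · simpa [h] using hz0 j
        · intro j
          rw [hpj]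
          by_cases h : j = jk
          · subst h
            rw [if_pos rfl]
            rcases htb' with h' | h'
            · exact ⟨le_of_eq h'.symm, by rw [h']; exact (hαβ jk).le⟩
            · exact ⟨by rw [h']; exact (hαβ jk).le, le_of_eq h'⟩
          · simp only [if_neg h]
            exact hzc j
        · intro j hj
          rw [hpj]
          by_cases h : j = jk
          · subst h
            simpa using htb'
          · simp only [if_neg h]
            refine hzb j ?_
            have hne : (j : ℕ) ≠ k := fun hk => h (Fin.ext hk)
            omega
      have hfin := PLAux.sectorPL (hα jk) (hαβ jk) (hβ jk) (hopening jk) hr₀.le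
        (fun t => F (p t)) hGdiff hGcont hGgrow hGbd (hz0 jk) (hzc jk).1 (hzc jk).2
      simpa only [hpz] using hfin
  intro z hz
  set u : ℕ → EuclideanSpace ℂ (Fin d) := fun m =>
    (PiLp.continuousLinearEquiv 2 ℂ (fun _ : Fin d => ℂ)).symm
      (fun j => if z j = 0 then ((1 / (m + 1 : ℝ) : ℝ) : ℂ) * Complex.exp (γ j * I) else z j)
    with hudef
  have huj : ∀ (m : ℕ) (j : Fin d),
      u m j = if z j = 0 then ((1 / (m + 1 : ℝ) : ℝ) : ℂ) * Complex.exp (γ j * I) else z j :=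
    fun m j => rfl
  have hm1 : ∀ m : ℕ, 0 < (1 / (m + 1 : ℝ)) := fun m => by positivity
  have humem : ∀ m j, u m j ≠ 0 ∧ α j ≤ (u m j).arg ∧ (u m j).arg ≤ β j := by
    intro m j
    rw [huj]
    by_cases h : z j = 0
    · rw [if_pos h]
      have harg := PLAux.argAux (1 / (m + 1 : ℝ)) (γ j) (hm1 m) (hγπ j).1 (hγπ j).2
      exact ⟨mul_ne_zero (Complex.ofReal_ne_zero.mpr (by positivity)) (Complex.exp_ne_zero _),
        by rw [harg]; exact (hγa j).le, by rw [harg]; exact (hγb j).le⟩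
    · rw [if_neg h]
      exact ⟨h, (hz j).resolve_left h⟩
  have humemΩ : ∀ m, u m ∈ {z : EuclideanSpace ℂ (Fin d) |
      ∀ j, z j = 0 ∨ (α j ≤ (z j).arg ∧ (z j).arg ≤ β j)} :=
    fun m j => Or.inr (humem m j).2
  have hulim : Filter.Tendsto u Filter.atTop (nhds z) := by
    have hpi : Filter.Tendsto
        (fun m : ℕ => (fun j : Fin d =>
          if z j = 0 then ((1 / (m + 1 : ℝ) : ℝ) : ℂ) * Complex.exp (γ j * I) else z j))
        Filter.atTop (nhds (fun j => z j)) := by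
      rw [tendsto_pi_nhds]
      intro j
      by_cases h : z j = 0
      · simp only [if_pos h]
        have h0 : Filter.Tendsto (fun m : ℕ => (1 / (m + 1 : ℝ))) Filter.atTop (nhds 0) :=
          tendsto_one_div_add_atTop_nhds_zero_nat
        have hcont3 : Continuous fun s : ℝ => ((s : ℂ) * Complex.exp (γ j * I)) :=
          Complex.continuous_ofReal.mul continuous_const
        have h1 := (hcont3.tendsto _).comp h0
        simpa [h, Function.comp_def] using h1
      · simp [h]
    exact ((PiLp.continuousLinearEquiv 2 ℂ
      (fun _ : Fin d => ℂ)).symm.continuous.tendsto _).comp hpi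
  have htend : Filter.Tendsto (fun m => ‖F (u m)‖) Filter.atTop (nhds ‖F z‖) := by
    have hcw := (hF₂ z hz).tendsto
    have h2 : Filter.Tendsto u Filter.atTop
        (nhdsWithin z {z : EuclideanSpace ℂ (Fin d) |
          ∀ j, z j = 0 ∨ (α j ≤ (z j).arg ∧ (z j).arg ≤ β j)}) := by
      rw [tendsto_nhdsWithin_iff]
      exact ⟨hulim, Filter.Eventually.of_forall humemΩ⟩
    exact (hcw.comp h2).norm
  refine le_of_tendsto htend (Filter.Eventually.of_forall fun m => ?_)
  exact main d (u m) (fun j => (humem m j).1) (fun j => (humem m j).2)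
    (fun j hj => absurd j.isLt (not_lt.mpr hj))

end Main
end

section
/- Let d ≥ 1, σ > 0 and set p = 2σ/(σ+1) (so 0 < p < 2), and let φ(x) = π^{−d/4} e^{−|x|²/2}. Then there exists a constant c > 0, depending only on d and σ, such that for every r > 0 there is a constant C_r > 0 with the following property: for every measurable f : ℝ^d → ℂ and every A ≥ 0 such that |f(y)| ≤ A·e^{−|y|²/2}·e^{c·r·|y|^p} for all y ∈ ℝ^d, one has |V_φ f(x,ξ)| ≤ C_r·A·e^{−|x|²/4}·e^{r|x|^p} for all x, ξ ∈ ℝ^d. -/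
open MeasureTheory Complex
open scoped RealInnerProductSpace

/-- For `0 < q < 2` and `r > 0`, the function `r t^q - t^2/2` is bounded above on `t ≥ 0`. -/
lemma aux_sup_bound (q r : ℝ) (hq0 : 0 < q) (hq2 : q < 2) (hr : 0 < r) :
    ∃ K : ℝ, 0 ≤ K ∧ ∀ t : ℝ, 0 ≤ t → r * t ^ q ≤ t ^ (2 : ℕ) / 2 + K := by
  set T : ℝ := max 1 ((2 * r) ^ ((2 - q)⁻¹)) with hT
  have hT1 : (1 : ℝ) ≤ T := le_max_left _ _
  have hT0 : 0 < T := lt_of_lt_of_le one_pos hT1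
  refine ⟨r * T ^ q, by positivity, fun t ht => ?_⟩
  rcases le_total t T with h | h
  · have : r * t ^ q ≤ r * T ^ q :=
      mul_le_mul_of_nonneg_left (Real.rpow_le_rpow ht h hq0.le) hr.le
    nlinarith [sq_nonneg t]
  · have ht1 : (1 : ℝ) ≤ t := le_trans hT1 h
    have ht0 : (0 : ℝ) < t := lt_of_lt_of_le one_pos ht1
    have h2q : 0 < 2 - q := by linarith
    have key : 2 * r ≤ t ^ (2 - q) := by
      have h1 : (2 * r) ^ ((2 - q)⁻¹) ≤ t := le_trans (le_max_right _ _) h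
      calc 2 * r = ((2 * r) ^ ((2 - q)⁻¹)) ^ (2 - q) := by
            rw [← Real.rpow_mul (by positivity), inv_mul_cancel₀ h2q.ne', Real.rpow_one]
        _ ≤ t ^ (2 - q) := Real.rpow_le_rpow (by positivity) h1 h2q.le
    have hstep : r * t ^ q ≤ (t ^ (2 - q) / 2) * t ^ q :=
      mul_le_mul_of_nonneg_right (by linarith) (Real.rpow_nonneg ht0.le q)
    have ht2 : t ^ (2 - q) * t ^ q = t ^ (2 : ℕ) := by
      rw [← Real.rpow_add ht0]
      norm_num
    have hK : 0 ≤ r * T ^ q := by positivity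
    calc r * t ^ q ≤ (t ^ (2 - q) / 2) * t ^ q := hstep
      _ = t ^ (2 : ℕ) / 2 := by rw [div_mul_eq_mul_div, ht2]
      _ ≤ t ^ (2 : ℕ) / 2 + r * T ^ q := by linarith

lemma aux_add_rpow (a b q : ℝ) (ha : 0 ≤ a) (hb : 0 ≤ b) (hq : 0 ≤ q) :
    (a + b) ^ q ≤ 2 ^ q * (a ^ q + b ^ q) := by
  have hmax : a + b ≤ 2 * max a b := by
    rcases le_total a b with h | h
    · simp [max_eq_right h]; linarith
    · simp [max_eq_left h]; linarith
  have h0 : (0 : ℝ) ≤ max a b := le_max_of_le_left ha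
  calc (a + b) ^ q ≤ (2 * max a b) ^ q :=
        Real.rpow_le_rpow (by linarith) hmax hq
    _ = 2 ^ q * (max a b) ^ q := Real.mul_rpow (by norm_num) h0
    _ ≤ 2 ^ q * (a ^ q + b ^ q) := by
        apply mul_le_mul_of_nonneg_left _ (by positivity)
        rcases le_total a b with h | h
        · rw [max_eq_right h]
          have := Real.rpow_nonneg ha q; linarith
        · rw [max_eq_left h]
          have := Real.rpow_nonneg hb q; linarith


/-- The short-time Fourier transform of `f` with window `φ`:
`V_φ f(x,ξ) = (2π)^{−d/2} ∫ f(y) conj(φ(y−x)) e^{−i⟨y,ξ⟩} dy`. -/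
noncomputable def STFT {d : ℕ} (φ f : EuclideanSpace ℝ (Fin d) → ℂ)
    (x ξ : EuclideanSpace ℝ (Fin d)) : ℂ :=
  (((2 * Real.pi) ^ (-(d : ℝ) / 2) : ℝ) : ℂ) *
    ∫ y, f y * (starRingEnd ℂ) (φ (y - x)) *
      Complex.exp (-(Complex.I * (⟪y, ξ⟫ : ℝ)))

/-- Estimate \eqref{Eq:FTEstGivesWeakPilSpProp1} in the Roumieu case
`s = ♭_σ`: a weighted Gaussian bound on `f` yields a weighted Gaussian bound
on its short-time Fourier transform with Gaussian window, with weight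
`e^{−r|y|^p}`, `p = 2σ/(σ+1)`. -/
theorem stft_bound_of_weighted_bound_flat
    (d : ℕ) (hd : 1 ≤ d) (σ : ℝ) (hσ : 0 < σ) (p : ℝ) (hp : p = 2 * σ / (σ + 1))
    (φ : EuclideanSpace ℝ (Fin d) → ℂ)
    (hφ : φ = fun x => ((Real.pi ^ (-(d : ℝ) / 4) : ℝ) : ℂ) *
      Complex.exp (-((‖x‖ : ℂ) ^ 2) / 2)) :
    ∃ c : ℝ, 0 < c ∧ ∀ r : ℝ, 0 < r → ∃ C : ℝ, 0 < C ∧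
      ∀ f : EuclideanSpace ℝ (Fin d) → ℂ, Measurable f →
      ∀ A : ℝ, 0 ≤ A →
        (∀ y, ‖f y‖ ≤ A * Real.exp (-‖y‖ ^ 2 / 2) * Real.exp (c * r * ‖y‖ ^ p)) →
        ∀ x ξ, ‖STFT φ f x ξ‖ ≤
          C * A * Real.exp (-‖x‖ ^ 2 / 4) * Real.exp (r * ‖x‖ ^ p) := by
  have hπ := Real.pi_pos
  have hp0 : 0 < p := by rw [hp]; positivity
  have hp2 : p < 2 := by
    rw [hp, div_lt_iff₀ (by linarith)]
    linarith
  refine ⟨1, one_pos, fun r hr => ?_⟩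
  obtain ⟨K, hK0, hK⟩ := aux_sup_bound p (2 ^ p * r) hp0 hp2 (by positivity)
  set P : ℝ := Real.pi ^ (-(d : ℝ) / 4) with hPdef
  have hP : 0 < P := Real.rpow_pos_of_pos hπ _
  set I0 : ℝ := (Real.pi / 2⁻¹) ^ ((d : ℝ) / 2) with hI0def
  have hI0 : 0 < I0 := Real.rpow_pos_of_pos (by positivity) _
  have hG : 0 < (2 * Real.pi) ^ (-(d : ℝ) / 2) := Real.rpow_pos_of_pos (by positivity) _
  refine ⟨(2 * Real.pi) ^ (-(d : ℝ) / 2) * (P * Real.exp K * I0), by positivity,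
    fun f hfm A hA hf x ξ => ?_⟩
  -- base Gaussian integrability
  have hbase : Integrable (fun v : EuclideanSpace ℝ (Fin d) =>
      Real.exp (-(2⁻¹ : ℝ) * ‖v‖ ^ 2)) := by
    have h := (GaussianFourier.integrable_cexp_neg_mul_sq_norm_add
      (V := EuclideanSpace ℝ (Fin d)) (b := (2⁻¹ : ℂ)) (by norm_num) 0 0).norm
    refine h.congr (Filter.Eventually.of_forall fun v => ?_)
    have hc : (-(2⁻¹ : ℂ) * (‖v‖ : ℂ) ^ 2 + 0 * (⟪(0 : EuclideanSpace ℝ (Fin d)), v⟫ : ℝ))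
        = ((-(2⁻¹ : ℝ) * ‖v‖ ^ 2 : ℝ) : ℂ) := by push_cast; ring
    simp only [hc, Complex.norm_exp, Complex.ofReal_re]
  set M : ℝ := A * P * Real.exp K * Real.exp (-‖x‖ ^ 2 / 4) * Real.exp (r * ‖x‖ ^ p) with hM
  -- pointwise bound
  have hptw : ∀ y, ‖f y * (starRingEnd ℂ) (φ (y - x)) *
      Complex.exp (-(Complex.I * (⟪y, ξ⟫ : ℝ)))‖ ≤
      M * Real.exp (-(2⁻¹ : ℝ) * ‖y - (2 : ℝ)⁻¹ • x‖ ^ 2) := by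
    intro y
    set z := y - (2 : ℝ)⁻¹ • x with hz
    have hnexp : ‖Complex.exp (-(Complex.I * (⟪y, ξ⟫ : ℝ)))‖ = 1 := by
      rw [Complex.norm_exp]
      simp
    have hφn : ‖φ (y - x)‖ = P * Real.exp (-‖y - x‖ ^ 2 / 2) := by
      rw [hφ]
      simp only []
      rw [norm_mul, Complex.norm_real, Real.norm_eq_abs, abs_of_pos hP]
      have hc : (-((‖y - x‖ : ℂ) ^ 2) / 2) = ((-‖y - x‖ ^ 2 / 2 : ℝ) : ℂ) := by
        push_cast; ring
      rw [hc, Complex.norm_exp, Complex.ofReal_re]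
    have hpar : ‖z‖ ^ 2 = ‖y‖ ^ 2 - ⟪y, x⟫ + ‖x‖ ^ 2 / 4 := by
      rw [hz, norm_sub_sq_real, real_inner_smul_right, norm_smul, Real.norm_eq_abs,
        abs_of_pos (by norm_num : (0 : ℝ) < 2⁻¹)]
      ring
    have hsq : ‖y - x‖ ^ 2 = ‖y‖ ^ 2 - 2 * ⟪y, x⟫ + ‖x‖ ^ 2 := norm_sub_sq_real y x
    have hyle : ‖y‖ ≤ ‖z‖ + 2⁻¹ * ‖x‖ := by
      have hy : y = z + (2 : ℝ)⁻¹ • x := by rw [hz]; abel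
      calc ‖y‖ = ‖z + (2 : ℝ)⁻¹ • x‖ := by rw [← hy]
        _ ≤ ‖z‖ + ‖(2 : ℝ)⁻¹ • x‖ := norm_add_le _ _
        _ = ‖z‖ + 2⁻¹ * ‖x‖ := by
            rw [norm_smul, Real.norm_eq_abs, abs_of_pos (by norm_num : (0 : ℝ) < 2⁻¹)]
    have hyr : r * ‖y‖ ^ p ≤ (2 ^ p * r) * ‖z‖ ^ p + r * ‖x‖ ^ p := by
      calc r * ‖y‖ ^ p ≤ r * (‖z‖ + 2⁻¹ * ‖x‖) ^ p :=
            mul_le_mul_of_nonneg_left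
              (Real.rpow_le_rpow (norm_nonneg _) hyle hp0.le) hr.le
        _ ≤ r * (2 ^ p * (‖z‖ ^ p + (2⁻¹ * ‖x‖) ^ p)) :=
            mul_le_mul_of_nonneg_left
              (aux_add_rpow _ _ _ (norm_nonneg _) (by positivity) hp0.le) hr.le
        _ = (2 ^ p * r) * ‖z‖ ^ p + r * (2 ^ p * (2⁻¹ : ℝ) ^ p) * ‖x‖ ^ p := by
            rw [Real.mul_rpow (by norm_num) (norm_nonneg _)]; ring
        _ = (2 ^ p * r) * ‖z‖ ^ p + r * ‖x‖ ^ p := by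
            rw [← Real.mul_rpow (by norm_num) (by norm_num)]
            norm_num
    have hKz := hK ‖z‖ (norm_nonneg _)
    have hexpo : -‖y‖ ^ 2 / 2 + 1 * r * ‖y‖ ^ p + -‖y - x‖ ^ 2 / 2 ≤
        K + -‖x‖ ^ 2 / 4 + r * ‖x‖ ^ p + -(2⁻¹ : ℝ) * ‖z‖ ^ 2 := by
      have h2 : (‖z‖ : ℝ) ^ (2 : ℕ) = ‖z‖ ^ 2 := by norm_num
      rw [h2] at hKz
      nlinarith [hpar, hsq, hyr, hKz]
    calc ‖f y * (starRingEnd ℂ) (φ (y - x)) * Complex.exp (-(Complex.I * (⟪y, ξ⟫ : ℝ)))‖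
        = ‖f y‖ * ‖φ (y - x)‖ := by
          rw [norm_mul, norm_mul, RCLike.norm_conj, hnexp, mul_one]
      _ ≤ (A * Real.exp (-‖y‖ ^ 2 / 2) * Real.exp (1 * r * ‖y‖ ^ p)) *
            (P * Real.exp (-‖y - x‖ ^ 2 / 2)) :=
          mul_le_mul (hf y) (le_of_eq hφn) (norm_nonneg _) (by positivity)
      _ = (A * P) * Real.exp (-‖y‖ ^ 2 / 2 + 1 * r * ‖y‖ ^ p + -‖y - x‖ ^ 2 / 2) := by
          rw [Real.exp_add, Real.exp_add]; ring
      _ ≤ (A * P) * Real.exp (K + -‖x‖ ^ 2 / 4 + r * ‖x‖ ^ p + -(2⁻¹ : ℝ) * ‖z‖ ^ 2) :=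
          mul_le_mul_of_nonneg_left (Real.exp_le_exp.mpr hexpo) (by positivity)
      _ = M * Real.exp (-(2⁻¹ : ℝ) * ‖z‖ ^ 2) := by
          rw [hM, Real.exp_add, Real.exp_add, Real.exp_add]; ring
  have hbint : Integrable (fun y : EuclideanSpace ℝ (Fin d) =>
      M * Real.exp (-(2⁻¹ : ℝ) * ‖y - (2 : ℝ)⁻¹ • x‖ ^ 2)) :=
    (hbase.comp_sub_right ((2 : ℝ)⁻¹ • x)).const_mul M
  have hle := norm_integral_le_of_norm_le hbint (Filter.Eventually.of_forall hptw)
  have hintval : (∫ y : EuclideanSpace ℝ (Fin d),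
      M * Real.exp (-(2⁻¹ : ℝ) * ‖y - (2 : ℝ)⁻¹ • x‖ ^ 2)) = M * I0 := by
    rw [MeasureTheory.integral_const_mul]
    rw [integral_sub_right_eq_self
      (fun v : EuclideanSpace ℝ (Fin d) => Real.exp (-(2⁻¹ : ℝ) * ‖v‖ ^ 2)) ((2 : ℝ)⁻¹ • x)]
    rw [GaussianFourier.integral_rexp_neg_mul_sq_norm (by norm_num : (0 : ℝ) < 2⁻¹)]
    rw [finrank_euclideanSpace_fin]
  calc ‖STFT φ f x ξ‖
      = (2 * Real.pi) ^ (-(d : ℝ) / 2) *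
        ‖∫ y, f y * (starRingEnd ℂ) (φ (y - x)) *
          Complex.exp (-(Complex.I * (⟪y, ξ⟫ : ℝ)))‖ := by
        rw [STFT, norm_mul, Complex.norm_real, Real.norm_eq_abs, abs_of_pos hG]
    _ ≤ (2 * Real.pi) ^ (-(d : ℝ) / 2) * (M * I0) :=
        mul_le_mul_of_nonneg_left (hle.trans_eq hintval) hG.le
    _ = (2 * Real.pi) ^ (-(d : ℝ) / 2) * (P * Real.exp K * I0) * A *
        Real.exp (-‖x‖ ^ 2 / 4) * Real.exp (r * ‖x‖ ^ p) := by
        rw [hM]; ring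
end

section
/- Let d ≥ 1, let s ∈ ℝ with 0 ≤ s < 1/2 and set q = 1/(1 − 2s) (so q ≥ 1), and let φ(x) = π^{−d/4} e^{−|x|²/2}. Then there exists a constant c > 0, depending only on d and s, such that for every r > 0 there is a constant C_r > 0 with the following property: for every measurable f : ℝ^d → ℂ and every A ≥ 0 such that |f(y)| ≤ A·e^{−|y|²/2}·e^{c·r·(log(1+|y|))^q} for all y ∈ ℝ^d, one has |V_φ f(x,ξ)| ≤ C_r·A·e^{−|x|²/4}·e^{r(log(1+|x|))^q} for all x, ξ ∈ ℝ^d. -/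
open MeasureTheory Complex
open scoped RealInnerProductSpace

/-- Parallelogram-type identity for the Gaussian windows. -/
lemma aux_norm_id {E : Type*} [NormedAddCommGroup E] [InnerProductSpace ℝ E] (x y : E) :
    ‖y‖^2/2 + ‖y - x‖^2/2 = ‖x‖^2/4 + ‖y - (2⁻¹:ℝ)•x‖^2 := by
  have h1 : ‖y - x‖^2 = ‖y‖^2 - 2*⟪y,x⟫ + ‖x‖^2 := norm_sub_sq_real y x
  have h2 : ‖y - (2⁻¹:ℝ)•x‖^2 = ‖y‖^2 - 2*⟪y,(2⁻¹:ℝ)•x⟫ + ‖(2⁻¹:ℝ)•x‖^2 :=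
    norm_sub_sq_real _ _
  rw [real_inner_smul_right] at h2
  have h3 : ‖(2⁻¹:ℝ)•x‖^2 = 2⁻¹^2 * ‖x‖^2 := by
    rw [norm_smul, mul_pow]; norm_num
  rw [h3] at h2
  linarith

/-- `(α+β)^q ≤ 2^q (α^q + β^q)` for nonnegative reals. -/
lemma aux_rpow_add_le (α β : ℝ) (hα : 0 ≤ α) (hβ : 0 ≤ β) (q : ℝ) (hq : 0 ≤ q) :
    (α + β) ^ q ≤ 2 ^ q * (α ^ q + β ^ q) := by
  have h1 : (α + β) ^ q ≤ (2 * max α β) ^ q := by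
    apply Real.rpow_le_rpow (by positivity) ?_ hq
    rcases max_cases α β with ⟨h, h'⟩ | ⟨h, h'⟩ <;> rw [h] <;> linarith
  have h2 : (2 * max α β) ^ q = 2 ^ q * (max α β) ^ q :=
    Real.mul_rpow (by norm_num) (le_max_iff.2 (Or.inl hα))
  have h3 : (max α β) ^ q ≤ α ^ q + β ^ q := by
    rcases max_cases α β with ⟨h, h'⟩ | ⟨h, h'⟩ <;> rw [h]
    · nlinarith [Real.rpow_nonneg hβ q]
    · nlinarith [Real.rpow_nonneg hα q]
  calc (α + β) ^ q ≤ 2 ^ q * (max α β) ^ q := by rw [← h2]; exact h1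
    _ ≤ 2 ^ q * (α ^ q + β ^ q) := by
        have : (0:ℝ) < 2 ^ q := Real.rpow_pos_of_pos (by norm_num) q
        nlinarith

/-- `log v ≤ q v^{1/q}`. -/
lemma aux_log_le (v q : ℝ) (hv : 1 ≤ v) (hq : 0 < q) : Real.log v ≤ q * v ^ (1/q) := by
  have hv0 : (0:ℝ) < v := by linarith
  have h1 : Real.log (v ^ (1/q)) = (1/q) * Real.log v := Real.log_rpow hv0 _
  have h2 : Real.log (v ^ (1/q)) ≤ v ^ (1/q) := by
    have := Real.log_le_sub_one_of_pos (Real.rpow_pos_of_pos hv0 (1/q))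
    linarith
  have h3 := mul_le_mul_of_nonneg_left h2 hq.le
  rw [h1] at h3
  calc Real.log v = q * ((1/q) * Real.log v) := by field_simp
    _ ≤ q * v ^ (1/q) := h3

/-- `r (log(1+t))^q ≤ (rq^q + (rq^q)²/2) + t²/2`. -/
lemma aux_log_pow_le (r q t : ℝ) (hr : 0 < r) (hq : 0 < q) (ht : 0 ≤ t) :
    r * Real.log (1 + t) ^ q ≤ (r*q^q + (r*q^q)^2/2) + t^2/2 := by
  have hv : (1:ℝ) ≤ 1 + t := by linarith
  have hv0 : (0:ℝ) < 1 + t := by linarith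
  have h1 : Real.log (1+t) ≤ q * (1+t) ^ (1/q) := aux_log_le _ _ hv hq
  have hL0 : 0 ≤ Real.log (1+t) := Real.log_nonneg hv
  have h2 : Real.log (1+t) ^ q ≤ (q * (1+t) ^ (1/q)) ^ q :=
    Real.rpow_le_rpow hL0 h1 hq.le
  have h3 : (q * (1+t) ^ (1/q)) ^ q = q ^ q * (1 + t) := by
    rw [Real.mul_rpow hq.le (Real.rpow_nonneg hv0.le _), ← Real.rpow_mul hv0.le,
      one_div, inv_mul_cancel₀ hq.ne', Real.rpow_one]
  rw [h3] at h2
  have ha : 0 < r * q ^ q := mul_pos hr (Real.rpow_pos_of_pos hq q)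
  have h4 : r * Real.log (1+t) ^ q ≤ r * (q ^ q * (1 + t)) :=
    mul_le_mul_of_nonneg_left h2 hr.le
  nlinarith [sq_nonneg (r * q ^ q - t)]

/-- The Gaussian is integrable. -/
lemma aux_gauss_integrable (d : ℕ) :
    Integrable (fun u : EuclideanSpace ℝ (Fin d) => Real.exp (-‖u‖^2/2)) := by
  have h := (GaussianFourier.integrable_cexp_neg_mul_sq_norm_add
    (V := EuclideanSpace ℝ (Fin d)) (b := (1/2:ℂ)) (by norm_num) 0 0).norm
  convert h using 2 with u
  rw [Complex.norm_exp]
  congr 1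
  have : ((‖u‖:ℂ) ^ 2).re = ‖u‖^2 := by
    rw [← Complex.ofReal_pow, Complex.ofReal_re]
  simp [this]
  ring

/-- Estimate \eqref{Eq:FTEstGivesWeakPilSpProp1} in the sub-critical case
`0 ≤ s < 1/2`: a weighted Gaussian bound on `f` yields a weighted Gaussian
bound on its short-time Fourier transform with Gaussian window, with weight
`e^{−r(log(1+|y|))^q}`, `q = 1/(1−2s)`. -/
theorem stft_bound_of_weighted_bound_log
    (d : ℕ) (hd : 1 ≤ d) (s : ℝ) (hs0 : 0 ≤ s) (hs : s < 1 / 2)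
    (q : ℝ) (hq : q = 1 / (1 - 2 * s))
    (φ : EuclideanSpace ℝ (Fin d) → ℂ)
    (hφ : φ = fun x => ((Real.pi ^ (-(d : ℝ) / 4) : ℝ) : ℂ) *
      Complex.exp (-((‖x‖ : ℂ) ^ 2) / 2)) :
    ∃ c : ℝ, 0 < c ∧ ∀ r : ℝ, 0 < r → ∃ C : ℝ, 0 < C ∧
      ∀ f : EuclideanSpace ℝ (Fin d) → ℂ, Measurable f →
      ∀ A : ℝ, 0 ≤ A →
        (∀ y, ‖f y‖ ≤ A * Real.exp (-‖y‖ ^ 2 / 2) *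
          Real.exp (c * r * Real.log (1 + ‖y‖) ^ q)) →
        ∀ x ξ, ‖STFT φ f x ξ‖ ≤
          C * A * Real.exp (-‖x‖ ^ 2 / 4) *
            Real.exp (r * Real.log (1 + ‖x‖) ^ q) := by
  have h2s : 0 < 1 - 2 * s := by linarith
  have hq1 : 1 ≤ q := by
    rw [hq, le_div_iff₀ h2s]; linarith
  have hq0 : 0 < q := lt_of_lt_of_le one_pos hq1
  refine ⟨(2:ℝ)^(-q), Real.rpow_pos_of_pos two_pos _, ?_⟩
  intro r hr
  have hint := aux_gauss_integrable d
  set G : ℝ := ∫ u : EuclideanSpace ℝ (Fin d), Real.exp (-‖u‖^2/2) with hGdef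
  have hG : 0 < G := by
    refine (integral_pos_iff_support_of_nonneg (fun u => (Real.exp_pos _).le) hint).2 ?_
    have hsupp : Function.support
        (fun u : EuclideanSpace ℝ (Fin d) => Real.exp (-‖u‖^2/2)) = Set.univ := by
      ext u; simp [Function.support, (Real.exp_pos _).ne']
    rw [hsupp]
    calc (0:ENNReal) < volume (Metric.ball (0 : EuclideanSpace ℝ (Fin d)) 1) :=
          Metric.measure_ball_pos _ _ one_pos
      _ ≤ volume Set.univ := measure_mono (Set.subset_univ _)
  set M : ℝ := r*q^q + (r*q^q)^2/2 with hMdef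
  have hcd : (0:ℝ) < (2*Real.pi)^(-(d:ℝ)/2) :=
    Real.rpow_pos_of_pos (by positivity) _
  have hcp : (0:ℝ) < Real.pi^(-(d:ℝ)/4) := Real.rpow_pos_of_pos Real.pi_pos _
  refine ⟨(2*Real.pi)^(-(d:ℝ)/2) * Real.pi^(-(d:ℝ)/4) * Real.exp M * G,
    by positivity, ?_⟩
  intro f hf A hA hfA x ξ
  set K : ℝ := A * Real.pi^(-(d:ℝ)/4) * Real.exp M * Real.exp (-‖x‖^2/4) *
    Real.exp (r * Real.log (1 + ‖x‖) ^ q) with hKdef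
  -- pointwise bound
  have hb : ∀ y, ‖f y * (starRingEnd ℂ) (φ (y - x)) *
      Complex.exp (-(Complex.I * (⟪y, ξ⟫ : ℝ)))‖ ≤
      K * Real.exp (-‖y - (2⁻¹:ℝ)•x‖^2/2) := by
    intro y
    set u := y - (2⁻¹:ℝ)•x with hu
    have hφn : ‖(starRingEnd ℂ) (φ (y - x))‖ =
        Real.pi^(-(d:ℝ)/4) * Real.exp (-‖y - x‖^2/2) := by
      rw [hφ]
      simp only [Complex.norm_conj]
      rw [norm_mul, Complex.norm_real, Real.norm_eq_abs, abs_of_pos hcp,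
        Complex.norm_exp]
      congr 2
      have : (-((‖y - x‖:ℂ) ^ 2) / 2) = ((-‖y - x‖^2/2 : ℝ) : ℂ) := by
        push_cast; ring
      rw [this, Complex.ofReal_re]
    have hξn : ‖Complex.exp (-(Complex.I * (⟪y, ξ⟫ : ℝ)))‖ = 1 := by
      rw [Complex.norm_exp]
      simp
    rw [norm_mul, norm_mul, hφn, hξn, mul_one]
    have hfy := hfA y
    -- key exponent inequality
    have hLy0 : 0 ≤ Real.log (1 + ‖y‖) := Real.log_nonneg (by linarith [norm_nonneg y])
    have hLu0 : 0 ≤ Real.log (1 + ‖u‖) := Real.log_nonneg (by linarith [norm_nonneg u])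
    have hLx0 : 0 ≤ Real.log (1 + ‖x‖) := Real.log_nonneg (by linarith [norm_nonneg x])
    have hyux : ‖y‖ ≤ ‖u‖ + ‖x‖ := by
      have hy : y = u + (2⁻¹:ℝ)•x := by rw [hu]; abel
      calc ‖y‖ = ‖u + (2⁻¹:ℝ)•x‖ := by rw [← hy]
        _ ≤ ‖u‖ + ‖(2⁻¹:ℝ)•x‖ := norm_add_le _ _
        _ ≤ ‖u‖ + ‖x‖ := by
            rw [norm_smul, Real.norm_eq_abs]
            have := norm_nonneg x
            rw [abs_of_pos (by norm_num : (0:ℝ) < 2⁻¹)]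
            linarith
    have hLle : Real.log (1 + ‖y‖) ≤ Real.log (1 + ‖u‖) + Real.log (1 + ‖x‖) := by
      have h1 : (1:ℝ) + ‖y‖ ≤ (1 + ‖u‖) * (1 + ‖x‖) := by
        nlinarith [norm_nonneg u, norm_nonneg x]
      calc Real.log (1 + ‖y‖) ≤ Real.log ((1 + ‖u‖) * (1 + ‖x‖)) :=
            Real.log_le_log (by positivity) h1
        _ = Real.log (1 + ‖u‖) + Real.log (1 + ‖x‖) :=
            Real.log_mul (by positivity) (by positivity)
    have hqkey : (2:ℝ)^(-q) * r * Real.log (1 + ‖y‖) ^ q ≤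
        r * Real.log (1 + ‖u‖) ^ q + r * Real.log (1 + ‖x‖) ^ q := by
      have h1 : Real.log (1 + ‖y‖) ^ q ≤
          (Real.log (1 + ‖u‖) + Real.log (1 + ‖x‖)) ^ q :=
        Real.rpow_le_rpow hLy0 hLle hq0.le
      have h2 := aux_rpow_add_le _ _ hLu0 hLx0 q hq0.le
      have hc2 : (2:ℝ)^(-q) * (2:ℝ)^q = 1 := by
        rw [← Real.rpow_add two_pos]; simp
      calc (2:ℝ)^(-q) * r * Real.log (1 + ‖y‖) ^ q
          ≤ (2:ℝ)^(-q) * r * ((2:ℝ)^q * (Real.log (1 + ‖u‖) ^ q + Real.log (1 + ‖x‖) ^ q)) := by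
            apply mul_le_mul_of_nonneg_left (h1.trans h2)
            positivity
        _ = ((2:ℝ)^(-q) * (2:ℝ)^q) *
              (r * (Real.log (1 + ‖u‖) ^ q + Real.log (1 + ‖x‖) ^ q)) := by ring
        _ = r * Real.log (1 + ‖u‖) ^ q + r * Real.log (1 + ‖x‖) ^ q := by
            rw [hc2]; ring
    have hMkey : r * Real.log (1 + ‖u‖) ^ q ≤ M + ‖u‖^2/2 :=
      aux_log_pow_le r q ‖u‖ hr hq0 (norm_nonneg u)
    have hnid : ‖y‖^2/2 + ‖y - x‖^2/2 = ‖x‖^2/4 + ‖u‖^2 := aux_norm_id x y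
    -- combine
    have hexp : Real.exp (-‖y‖^2/2) * Real.exp ((2:ℝ)^(-q) * r * Real.log (1 + ‖y‖) ^ q) *
        Real.exp (-‖y - x‖^2/2) ≤
        Real.exp M * Real.exp (-‖x‖^2/4) * Real.exp (r * Real.log (1 + ‖x‖) ^ q) *
        Real.exp (-‖u‖^2/2) := by
      rw [← Real.exp_add, ← Real.exp_add, ← Real.exp_add, ← Real.exp_add,
        ← Real.exp_add]
      apply Real.exp_le_exp.2
      linarith
    calc ‖f y‖ * (Real.pi^(-(d:ℝ)/4) * Real.exp (-‖y - x‖^2/2))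
        ≤ (A * Real.exp (-‖y‖^2/2) * Real.exp ((2:ℝ)^(-q) * r * Real.log (1 + ‖y‖) ^ q)) *
          (Real.pi^(-(d:ℝ)/4) * Real.exp (-‖y - x‖^2/2)) := by
          apply mul_le_mul_of_nonneg_right hfy (by positivity)
      _ = (A * Real.pi^(-(d:ℝ)/4)) *
          (Real.exp (-‖y‖^2/2) * Real.exp ((2:ℝ)^(-q) * r * Real.log (1 + ‖y‖) ^ q) *
            Real.exp (-‖y - x‖^2/2)) := by ring
      _ ≤ (A * Real.pi^(-(d:ℝ)/4)) *
          (Real.exp M * Real.exp (-‖x‖^2/4) * Real.exp (r * Real.log (1 + ‖x‖) ^ q) *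
            Real.exp (-‖u‖^2/2)) := by
          apply mul_le_mul_of_nonneg_left hexp (by positivity)
      _ = K * Real.exp (-‖u‖^2/2) := by rw [hKdef]; ring
  -- integrable dominating function
  have hgint : Integrable (fun y : EuclideanSpace ℝ (Fin d) =>
      K * Real.exp (-‖y - (2⁻¹:ℝ)•x‖^2/2)) :=
    (hint.comp_sub_right ((2⁻¹:ℝ)•x)).const_mul K
  have hnormle : ‖∫ y, f y * (starRingEnd ℂ) (φ (y - x)) *
      Complex.exp (-(Complex.I * (⟪y, ξ⟫ : ℝ)))‖ ≤
      ∫ y, K * Real.exp (-‖y - (2⁻¹:ℝ)•x‖^2/2) :=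
    norm_integral_le_of_norm_le hgint (Filter.Eventually.of_forall hb)
  have hIval : (∫ y : EuclideanSpace ℝ (Fin d),
      K * Real.exp (-‖y - (2⁻¹:ℝ)•x‖^2/2)) = K * G := by
    rw [integral_const_mul]
    congr 1
    exact integral_sub_right_eq_self
      (fun u : EuclideanSpace ℝ (Fin d) => Real.exp (-‖u‖^2/2)) ((2⁻¹:ℝ)•x)
  rw [hIval] at hnormle
  unfold STFT
  rw [norm_mul, Complex.norm_real, Real.norm_eq_abs, abs_of_pos hcd]
  calc (2*Real.pi)^(-(d:ℝ)/2) * ‖∫ y, f y * (starRingEnd ℂ) (φ (y - x)) *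
        Complex.exp (-(Complex.I * (⟪y, ξ⟫ : ℝ)))‖
      ≤ (2*Real.pi)^(-(d:ℝ)/2) * (K * G) :=
        mul_le_mul_of_nonneg_left hnormle hcd.le
    _ = (2*Real.pi)^(-(d:ℝ)/2) * Real.pi^(-(d:ℝ)/4) * Real.exp M * G * A *
        Real.exp (-‖x‖^2/4) * Real.exp (r * Real.log (1 + ‖x‖) ^ q) := by
        rw [hKdef]; ring
end

section
/- Let d ≥ 1, σ > 0 and set p = 2σ/(σ+1) (so 0 < p < 2), and let φ(x) = π^{−d/4} e^{−|x|²/2}. Then there exists a constant c > 0, depending only on d and σ, such that for every r > 0 there is a constant C_r > 0 with the following property: for every Schwartz function f : ℝ^d → ℂ and every B ≥ 0 such that |V_φ f(x,ξ)| ≤ B·e^{−(|x|²+|ξ|²)/4}·e^{r(|x|²+|ξ|²)^{p/2}} for all x, ξ ∈ ℝ^d, one has |f(x)| ≤ C_r·B·e^{−|x|²/2}·e^{c·r·|x|^p} for all x ∈ ℝ^d. -/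
open MeasureTheory Complex
open scoped RealInnerProductSpace

open FourierTransform
open scoped NNReal

lemma aux_rpow_add_le_s7 {a b q : ℝ} (ha : 0 ≤ a) (hb : 0 ≤ b) (hq : 0 ≤ q) (hq1 : q ≤ 1) :
    (a + b) ^ q ≤ a ^ q + b ^ q := by
  have h := NNReal.rpow_add_le_add_rpow a.toNNReal b.toNNReal hq hq1
  rw [← Real.coe_toNNReal a ha, ← Real.coe_toNNReal b hb, ← NNReal.coe_add,
    ← NNReal.coe_rpow, ← NNReal.coe_rpow, ← NNReal.coe_rpow, ← NNReal.coe_add]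
  exact_mod_cast h

lemma aux_sq_rpow {s q : ℝ} (hs : 0 ≤ s) : (s ^ 2) ^ (q / 2) = s ^ q := by
  rw [← Real.rpow_natCast s 2, ← Real.rpow_mul hs]
  congr 1
  push_cast
  ring

lemma aux_pointwise_pow_bound {a b pp : ℝ} (ha : 0 < a) (hb : 0 ≤ b) (hpp : 0 < pp)
    (hpp2 : pp < 2) :
    ∃ C : ℝ, 0 ≤ C ∧ ∀ t : ℝ, 0 ≤ t → b * t ^ pp ≤ a / 2 * t ^ 2 + C := by
  set T : ℝ := (2 * b / a) ^ (1 / (2 - pp)) with hT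
  have hTnn : 0 ≤ T := Real.rpow_nonneg (by positivity) _
  have hCnn : 0 ≤ b * T ^ pp := mul_nonneg hb (Real.rpow_nonneg hTnn _)
  refine ⟨b * T ^ pp, hCnn, fun t ht => ?_⟩
  rcases le_total t T with h | h
  · have h2 : t ^ pp ≤ T ^ pp := Real.rpow_le_rpow ht h hpp.le
    nlinarith [sq_nonneg t, mul_le_mul_of_nonneg_left h2 hb]
  · have hTval : T ^ (2 - pp) = 2 * b / a := by
      rw [hT, ← Real.rpow_mul (by positivity), one_div,
        inv_mul_cancel₀ (by linarith), Real.rpow_one]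
    rcases ht.eq_or_lt with rfl | htpos
    · have hb0 : b = 0 := by
        have hT0 : T = 0 := le_antisymm h hTnn
        have h3 := hTval
        rw [hT0, Real.zero_rpow (by linarith)] at h3
        field_simp at h3
        linarith
      simp [hb0, Real.zero_rpow hpp.ne']
    · have h1 : b ≤ a / 2 * t ^ (2 - pp) := by
        have hTle : T ^ (2 - pp) ≤ t ^ (2 - pp) :=
          Real.rpow_le_rpow hTnn h (by linarith)
        rw [hTval] at hTle
        calc b = a / 2 * (2 * b / a) := by field_simp
          _ ≤ a / 2 * t ^ (2 - pp) :=
              mul_le_mul_of_nonneg_left hTle (by positivity)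
      have hsplit : t ^ (2 - pp) * t ^ pp = t ^ 2 := by
        rw [← Real.rpow_add htpos, sub_add_cancel, Real.rpow_two]
      calc b * t ^ pp ≤ (a / 2 * t ^ (2 - pp)) * t ^ pp :=
            mul_le_mul_of_nonneg_right h1 (Real.rpow_nonneg ht _)
        _ = a / 2 * t ^ 2 := by rw [mul_assoc, hsplit]
        _ ≤ a / 2 * t ^ 2 + b * T ^ pp := le_add_of_nonneg_right hCnn

lemma aux_integrable_real_gauss {d : ℕ} {a : ℝ} (ha : 0 < a) :
    Integrable (fun ξ : EuclideanSpace ℝ (Fin d) => Real.exp (-a * ‖ξ‖ ^ 2)) := by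
  have h := GaussianFourier.integrable_cexp_neg_mul_sq_norm_add
    (V := EuclideanSpace ℝ (Fin d)) (b := (a : ℂ)) (by simpa using ha) 0 0
  refine h.norm.congr (Filter.Eventually.of_forall fun ξ => ?_)
  simp only [Complex.norm_exp]
  congr 1
  simp [← Complex.ofReal_pow, ← Complex.ofReal_mul, ← Complex.ofReal_neg]

lemma aux_integrable_gauss_rpow {d : ℕ} {a b pp : ℝ} (ha : 0 < a) (hb : 0 ≤ b)
    (hpp : 0 < pp) (hpp2 : pp < 2) :
    Integrable (fun ξ : EuclideanSpace ℝ (Fin d) =>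
      Real.exp (b * ‖ξ‖ ^ pp - a * ‖ξ‖ ^ 2)) := by
  obtain ⟨C, hC, hbd⟩ := aux_pointwise_pow_bound ha hb hpp hpp2
  have hg := (aux_integrable_real_gauss (d := d) (a := a / 2) (by linarith)).const_mul
    (Real.exp C)
  refine hg.mono' ?_ (Filter.Eventually.of_forall fun ξ => ?_)
  · apply Continuous.aestronglyMeasurable
    apply Real.continuous_exp.comp
    exact ((continuous_const.mul (continuous_norm.rpow_const fun x => Or.inr hpp.le))).sub
      (continuous_const.mul (continuous_norm.pow 2))
  · rw [Real.norm_eq_abs, Real.abs_exp, ← Real.exp_add]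
    apply Real.exp_le_exp.2
    have := hbd ‖ξ‖ (norm_nonneg ξ)
    nlinarith [sq_nonneg ‖ξ‖]

/-- Roumieu case `s = ♭_σ`: a Gaussian-weighted bound on the short-time
Fourier transform of `f` (with Gaussian window and weight
`e^{r|(x,ξ)|^p}`, `p = 2σ/(σ+1)`) yields a Gaussian-weighted pointwise bound
on `f`, with a dilated weight parameter `c·r`. -/
theorem pointwise_bound_of_stft_bound_flat
    (d : ℕ) (hd : 1 ≤ d) (σ : ℝ) (hσ : 0 < σ) (p : ℝ) (hp : p = 2 * σ / (σ + 1))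
    (φ : EuclideanSpace ℝ (Fin d) → ℂ)
    (hφ : φ = fun x => ((Real.pi ^ (-(d : ℝ) / 4) : ℝ) : ℂ) *
      Complex.exp (-((‖x‖ : ℂ) ^ 2) / 2)) :
    ∃ c : ℝ, 0 < c ∧ ∀ r : ℝ, 0 < r → ∃ C : ℝ, 0 < C ∧
      ∀ f : SchwartzMap (EuclideanSpace ℝ (Fin d)) ℂ,
      ∀ B : ℝ, 0 ≤ B →
        (∀ x ξ : EuclideanSpace ℝ (Fin d), ‖STFT φ (⇑f) x ξ‖ ≤
          B * Real.exp (-(‖x‖ ^ 2 + ‖ξ‖ ^ 2) / 4) *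
            Real.exp (r * (‖x‖ ^ 2 + ‖ξ‖ ^ 2) ^ (p / 2))) →
        ∀ x : EuclideanSpace ℝ (Fin d), ‖f x‖ ≤
          C * B * Real.exp (-‖x‖ ^ 2 / 2) * Real.exp (c * r * ‖x‖ ^ p) := by
  have hp0 : 0 < p := by rw [hp]; positivity
  have hp2 : p < 2 := by
    rw [hp, div_lt_iff₀ (by positivity)]
    linarith
  -- continuity and norm facts about φ
  have hφcont : Continuous φ := by
    rw [hφ]; fun_prop
  have hφnorm : ∀ t : EuclideanSpace ℝ (Fin d),
      ‖φ t‖ = Real.pi ^ (-(d : ℝ) / 4) * Real.exp (-‖t‖ ^ 2 / 2) := by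
    intro t
    rw [hφ]
    simp only [norm_mul, Complex.norm_real, Real.norm_eq_abs,
      Complex.norm_exp]
    rw [abs_of_pos (by positivity)]
    congr 1
    have h4 : -((‖t‖ : ℂ)) ^ 2 / 2 = ((-‖t‖ ^ 2 / 2 : ℝ) : ℂ) := by push_cast; ring
    rw [h4, Complex.ofReal_re]
  have hφbdd : ∀ t : EuclideanSpace ℝ (Fin d),
      ‖(starRingEnd ℂ) (φ t)‖ ≤ Real.pi ^ (-(d : ℝ) / 4) := by
    intro t
    rw [RCLike.norm_conj, hφnorm]
    calc Real.pi ^ (-(d : ℝ) / 4) * Real.exp (-‖t‖ ^ 2 / 2)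
        ≤ Real.pi ^ (-(d : ℝ) / 4) * 1 := by
          apply mul_le_mul_of_nonneg_left _ (by positivity)
          rw [Real.exp_le_one_iff]
          nlinarith [sq_nonneg ‖t‖]
      _ = _ := mul_one _
  set K : ℝ := (2 * Real.pi) ^ (-(d : ℝ) / 2) with hKdef
  have hK : 0 < K := Real.rpow_pos_of_pos (by positivity) _
  refine ⟨4, by norm_num, fun r hr => ?_⟩
  set b' : ℝ := r * (2 * Real.pi) ^ p with hb'def
  have hb' : 0 ≤ b' := by
    have : (0:ℝ) < (2 * Real.pi) ^ p := Real.rpow_pos_of_pos (by positivity) _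
    positivity
  set G : EuclideanSpace ℝ (Fin d) → ℝ :=
    fun ξ => Real.exp (b' * ‖ξ‖ ^ p - Real.pi ^ 2 * ‖ξ‖ ^ 2) with hGdef
  have hG : Integrable G :=
    aux_integrable_gauss_rpow (by positivity) hb' hp0 hp2
  set I : ℝ := ∫ ξ, G ξ with hIdef
  have hInn : 0 ≤ I := integral_nonneg fun ξ => (Real.exp_pos _).le
  set C : ℝ := K⁻¹ * Real.pi ^ ((d : ℝ) / 4) * I + 1 with hCdef
  refine ⟨C, by positivity, fun f B hB hyp y => ?_⟩
  set x : EuclideanSpace ℝ (Fin d) := (2 : ℝ) • y with hxdef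
  set g : EuclideanSpace ℝ (Fin d) → ℂ := fun t => f t * (starRingEnd ℂ) (φ (t - x))
    with hgdef
  have hgcont : Continuous g :=
    f.continuous.mul (continuous_star.comp (hφcont.comp (continuous_id.sub continuous_const)))
  have hgint : Integrable g := by
    refine ((f.integrable).norm.const_mul (Real.pi ^ (-(d : ℝ) / 4))).mono'
      hgcont.aestronglyMeasurable (Filter.Eventually.of_forall fun t => ?_)
    rw [hgdef]
    simp only [norm_mul, norm_norm]
    calc ‖f t‖ * ‖(starRingEnd ℂ) (φ (t - x))‖
        ≤ ‖f t‖ * Real.pi ^ (-(d : ℝ) / 4) :=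
          mul_le_mul_of_nonneg_left (hφbdd _) (norm_nonneg _)
      _ = Real.pi ^ (-(d : ℝ) / 4) * ‖f t‖ := mul_comm _ _
  -- relation between the STFT and the Fourier transform of g
  have hSTFT : ∀ ξ, STFT φ (⇑f) x ((2 * Real.pi) • ξ) = ((K : ℝ) : ℂ) * 𝓕 g ξ := by
    intro ξ
    rw [Real.fourier_eq']
    unfold STFT
    rw [hKdef]
    congr 1
    apply integral_congr_ae
    filter_upwards with t
    rw [smul_eq_mul, real_inner_smul_right]
    have harg : (-(Complex.I * ((2 * Real.pi * ⟪t, ξ⟫ : ℝ) : ℂ))) =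
        ((-2 * Real.pi * ⟪t, ξ⟫ : ℝ) : ℂ) * Complex.I := by
      push_cast; ring
    rw [harg, hgdef]
    ring
  set M : ℝ := K⁻¹ * B * Real.exp (-‖x‖ ^ 2 / 4) * Real.exp (r * ‖x‖ ^ p) with hMdef
  have hFgle : ∀ ξ, ‖𝓕 g ξ‖ ≤ M * G ξ := by
    intro ξ
    have h1 := hyp x ((2 * Real.pi) • ξ)
    rw [hSTFT ξ] at h1
    rw [norm_mul, Complex.norm_real, Real.norm_eq_abs, abs_of_pos hK] at h1
    have h2 : ‖𝓕 g ξ‖ ≤ K⁻¹ * (B * Real.exp (-(‖x‖ ^ 2 + ‖(2 * Real.pi) • ξ‖ ^ 2) / 4) *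
        Real.exp (r * (‖x‖ ^ 2 + ‖(2 * Real.pi) • ξ‖ ^ 2) ^ (p / 2))) := by
      rw [← le_div_iff₀' hK] at h1
      rwa [div_eq_inv_mul] at h1
    have hs : ‖(2 * Real.pi) • ξ‖ = 2 * Real.pi * ‖ξ‖ := by
      rw [norm_smul, Real.norm_eq_abs, abs_of_pos (by positivity)]
    -- exponent comparison
    have hexp : -(‖x‖ ^ 2 + ‖(2 * Real.pi) • ξ‖ ^ 2) / 4 +
        r * (‖x‖ ^ 2 + ‖(2 * Real.pi) • ξ‖ ^ 2) ^ (p / 2) ≤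
        -‖x‖ ^ 2 / 4 + r * ‖x‖ ^ p + (b' * ‖ξ‖ ^ p - Real.pi ^ 2 * ‖ξ‖ ^ 2) := by
      rw [hs]
      have hsub : (‖x‖ ^ 2 + (2 * Real.pi * ‖ξ‖) ^ 2) ^ (p / 2) ≤
          ‖x‖ ^ p + (2 * Real.pi) ^ p * ‖ξ‖ ^ p := by
        calc (‖x‖ ^ 2 + (2 * Real.pi * ‖ξ‖) ^ 2) ^ (p / 2)
            ≤ (‖x‖ ^ 2) ^ (p / 2) + ((2 * Real.pi * ‖ξ‖) ^ 2) ^ (p / 2) :=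
              aux_rpow_add_le_s7 (by positivity) (by positivity) (by positivity)
                (by linarith)
          _ = ‖x‖ ^ p + (2 * Real.pi * ‖ξ‖) ^ p := by
              rw [aux_sq_rpow (norm_nonneg x), aux_sq_rpow (by positivity)]
          _ = ‖x‖ ^ p + (2 * Real.pi) ^ p * ‖ξ‖ ^ p := by
              rw [Real.mul_rpow (by positivity) (norm_nonneg ξ)]
      have hr' := mul_le_mul_of_nonneg_left hsub hr.le
      rw [hb'def]
      nlinarith [sq_nonneg ‖ξ‖, Real.pi_pos]
    calc ‖𝓕 g ξ‖ ≤ K⁻¹ * (B * Real.exp (-(‖x‖ ^ 2 + ‖(2 * Real.pi) • ξ‖ ^ 2) / 4) *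
          Real.exp (r * (‖x‖ ^ 2 + ‖(2 * Real.pi) • ξ‖ ^ 2) ^ (p / 2))) := h2
      _ = K⁻¹ * B * Real.exp (-(‖x‖ ^ 2 + ‖(2 * Real.pi) • ξ‖ ^ 2) / 4 +
          r * (‖x‖ ^ 2 + ‖(2 * Real.pi) • ξ‖ ^ 2) ^ (p / 2)) := by
          rw [Real.exp_add]; ring
      _ ≤ K⁻¹ * B * Real.exp (-‖x‖ ^ 2 / 4 + r * ‖x‖ ^ p +
          (b' * ‖ξ‖ ^ p - Real.pi ^ 2 * ‖ξ‖ ^ 2)) := by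
          apply mul_le_mul_of_nonneg_left (Real.exp_le_exp.2 hexp) (by positivity)
      _ = M * G ξ := by
          rw [hMdef, hGdef, Real.exp_add, Real.exp_add]
          ring
  have hFgcont : Continuous (𝓕 g) :=
    VectorFourier.fourierIntegral_continuous Real.continuous_fourierChar
      (by exact continuous_inner) hgint
  have hFgint : Integrable (𝓕 g) := by
    refine (hG.const_mul M).mono' hFgcont.aestronglyMeasurable
      (Filter.Eventually.of_forall fun ξ => ?_)
    simpa using hFgle ξ
  have hinv : 𝓕⁻ (𝓕 g) y = g y :=
    hgint.fourierInv_fourier_eq hFgint hgcont.continuousAt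
  have hgy_le : ‖g y‖ ≤ M * I := by
    rw [← hinv, Real.fourierInv_eq]
    calc ‖∫ v, 𝐞 ⟪v, y⟫ • 𝓕 g v‖ ≤ ∫ v, M * G v :=
          norm_integral_le_of_norm_le (hG.const_mul M)
            (Filter.Eventually.of_forall fun v => by
              rw [Circle.norm_smul]; exact hFgle v)
      _ = M * I := by rw [hIdef, integral_const_mul]
  have hysub : y - x = -y := by
    rw [hxdef, two_smul]
    abel
  have hgy_eq : ‖g y‖ = ‖f y‖ * (Real.pi ^ (-(d : ℝ) / 4) * Real.exp (-‖y‖ ^ 2 / 2)) := by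
    rw [hgdef]
    simp only [norm_mul]
    rw [hysub, RCLike.norm_conj, hφnorm, norm_neg]
  have hxnorm : ‖x‖ = 2 * ‖y‖ := by
    rw [hxdef, norm_smul, Real.norm_eq_abs]
    norm_num
  have hxp : ‖x‖ ^ p = 2 ^ p * ‖y‖ ^ p := by
    rw [hxnorm, Real.mul_rpow (by norm_num) (norm_nonneg y)]
  have h2p : (2 : ℝ) ^ p ≤ 4 := by
    calc (2 : ℝ) ^ p ≤ (2 : ℝ) ^ (2 : ℝ) :=
          Real.rpow_le_rpow_of_exponent_le one_le_two hp2.le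
      _ = 4 := by
          rw [Real.rpow_two]; norm_num
  have hexp1 : Real.exp (r * ‖x‖ ^ p) ≤ Real.exp (4 * r * ‖y‖ ^ p) := by
    apply Real.exp_le_exp.2
    rw [hxp]
    have hyp' : 0 ≤ r * ‖y‖ ^ p := mul_nonneg hr.le (Real.rpow_nonneg (norm_nonneg y) p)
    calc r * (2 ^ p * ‖y‖ ^ p) = 2 ^ p * (r * ‖y‖ ^ p) := by ring
      _ ≤ 4 * (r * ‖y‖ ^ p) := mul_le_mul_of_nonneg_right h2p hyp'
      _ = 4 * r * ‖y‖ ^ p := by ring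
  have hexp2 : Real.exp (-‖x‖ ^ 2 / 4) =
      Real.exp (-‖y‖ ^ 2 / 2) * Real.exp (-‖y‖ ^ 2 / 2) := by
    rw [← Real.exp_add]
    congr 1
    rw [hxnorm]
    ring
  have hpi : Real.pi ^ ((d : ℝ) / 4) * Real.pi ^ (-(d : ℝ) / 4) = 1 := by
    rw [← Real.rpow_add Real.pi_pos,
      show (d : ℝ) / 4 + -(d : ℝ) / 4 = 0 by ring, Real.rpow_zero]
  have hA : K⁻¹ * I ≤ C * Real.pi ^ (-(d : ℝ) / 4) := by
    have h5 : (0:ℝ) < Real.pi ^ (-(d : ℝ) / 4) := by positivity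
    have h6 : (0:ℝ) < K⁻¹ := by positivity
    have h7 : K⁻¹ * I = (K⁻¹ * Real.pi ^ ((d : ℝ) / 4) * I) * Real.pi ^ (-(d : ℝ) / 4) := by
      linear_combination (K⁻¹ * I) * hpi.symm
    have h8 : K⁻¹ * Real.pi ^ ((d : ℝ) / 4) * I ≤ C := by
      rw [hCdef]
      linarith
    calc K⁻¹ * I = (K⁻¹ * Real.pi ^ ((d : ℝ) / 4) * I) * Real.pi ^ (-(d : ℝ) / 4) := h7
      _ ≤ C * Real.pi ^ (-(d : ℝ) / 4) := mul_le_mul_of_nonneg_right h8 h5.le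
  -- final assembly
  have hc0 : (0:ℝ) < Real.pi ^ (-(d : ℝ) / 4) * Real.exp (-‖y‖ ^ 2 / 2) := by positivity
  rw [← mul_le_mul_iff_of_pos_right hc0]
  calc ‖f y‖ * (Real.pi ^ (-(d : ℝ) / 4) * Real.exp (-‖y‖ ^ 2 / 2)) = ‖g y‖ := hgy_eq.symm
    _ ≤ M * I := hgy_le
    _ = (K⁻¹ * I) * (B * (Real.exp (-‖y‖ ^ 2 / 2) * Real.exp (-‖y‖ ^ 2 / 2)) *
        Real.exp (r * ‖x‖ ^ p)) := by
        rw [hMdef, hexp2]; ring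
    _ ≤ (C * Real.pi ^ (-(d : ℝ) / 4)) * (B * (Real.exp (-‖y‖ ^ 2 / 2) *
        Real.exp (-‖y‖ ^ 2 / 2)) * Real.exp (4 * r * ‖y‖ ^ p)) := by
        apply mul_le_mul hA _ (by positivity) (by positivity)
        apply mul_le_mul_of_nonneg_left hexp1 (by positivity)
    _ = C * B * Real.exp (-‖y‖ ^ 2 / 2) * Real.exp (4 * r * ‖y‖ ^ p) *
        (Real.pi ^ (-(d : ℝ) / 4) * Real.exp (-‖y‖ ^ 2 / 2)) := by ring
end

section
/- Let n ≥ 1, let s ∈ ℝ with 0 ≤ s < 1/2, set q = 1/(1 − 2s) (so q ≥ 1), let r ≥ 0, and define ω : ℝ^n → ℝ by ω(x) = e^{−r(log(1+|x|))^q}. Then there exist a real R ≥ 2 and positive constants c and C such that C^{−1}·ω(x) ≤ ω(x+y) ≤ C·ω(x) for all x, y ∈ ℝ^n satisfying |x| ≥ R·c and |x|·|y| ≤ c. -/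
open Real

/-- Mean value inequality for `rpow`: for `1 ≤ a ≤ b` and `1 ≤ p`,
`|b^p - a^p| ≤ p * b^(p-1) * (b - a)`. -/
lemma rpow_mvt_aux {a b p : ℝ} (ha : 1 ≤ a) (hab : a ≤ b) (hp : 1 ≤ p) :
    |b ^ p - a ^ p| ≤ p * b ^ (p - 1) * (b - a) := by
  have hb1 : (1 : ℝ) ≤ b := ha.trans hab
  have hderiv : ∀ t ∈ Set.Icc a b,
      HasDerivWithinAt (fun u : ℝ => u ^ p) (p * t ^ (p - 1)) (Set.Icc a b) t := by
    intro t ht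
    have : HasDerivAt (fun u : ℝ => u ^ p) (p * t ^ (p - 1)) t := by
      have ht0 : t ≠ 0 := (lt_of_lt_of_le zero_lt_one (ha.trans ht.1)).ne'
      simpa [mul_comm] using Real.hasDerivAt_rpow_const (p := p) (Or.inl ht0)
    exact this.hasDerivWithinAt
  have hbound : ∀ t ∈ Set.Ico a b, ‖p * t ^ (p - 1)‖ ≤ p * b ^ (p - 1) := by
    intro t ht
    have ht0 : (0 : ℝ) ≤ t := by linarith [ht.1]
    have h1 : t ^ (p - 1) ≤ b ^ (p - 1) :=
      Real.rpow_le_rpow ht0 ht.2.le (by linarith)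
    have h2 : (0 : ℝ) ≤ t ^ (p - 1) := Real.rpow_nonneg ht0 _
    rw [Real.norm_eq_abs, abs_of_nonneg (by positivity)]
    exact mul_le_mul_of_nonneg_left h1 (by linarith)
  have := norm_image_sub_le_of_norm_deriv_le_segment' hderiv hbound b
    (Set.right_mem_Icc.2 hab)
  simpa [Real.norm_eq_abs, abs_of_nonneg (sub_nonneg.2 hab), mul_comm] using this

/-- Core estimate: if `3 ≤ v ≤ u ≤ v + 1` and `(u - v) * v ≤ 2`, then the
difference of `(log)^q` is uniformly bounded. -/
lemma log_rpow_diff_bound {q u v : ℝ} (hq : 1 ≤ q) (hv : 3 ≤ v) (hvu : v ≤ u)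
    (hu1 : u ≤ v + 1) (huv : (u - v) * v ≤ 2) :
    |Real.log u ^ q - Real.log v ^ q| ≤ 2 * q * q ^ q := by
  have hv0 : (0 : ℝ) < v := by linarith
  have hu0 : (0 : ℝ) < u := by linarith
  set A := Real.log v with hA
  set B := Real.log u with hB
  have hA1 : 1 ≤ A := by
    rw [hA, Real.le_log_iff_exp_le hv0]
    calc Real.exp 1 ≤ 2.7182818286 := Real.exp_one_lt_d9.le
    _ ≤ v := by linarith
  have hAB : A ≤ B := Real.log_le_log hv0 hvu
  have hB1 : 1 ≤ B := hA1.trans hAB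
  -- B - A ≤ (u - v)/v
  have hBA : B - A ≤ (u - v) / v := by
    have : B - A = Real.log (u / v) := (Real.log_div hu0.ne' hv0.ne').symm
    rw [this]
    have := Real.log_le_sub_one_of_pos (x := u / v) (by positivity)
    have h2 : u / v - 1 = (u - v) / v := by field_simp
    linarith [h2 ▸ this]
  -- B^q ≤ q^q * u
  have hqpos : (0 : ℝ) < q := by linarith
  have hlogu : B ≤ q * u ^ (1 / q) := by
    have := Real.log_le_rpow_div hu0.le (by positivity : (0:ℝ) < 1 / q)
    rw [hB]
    calc Real.log u ≤ u ^ (1/q) / (1/q) := this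
    _ = q * u ^ (1/q) := by field_simp
  have hBq : B ^ q ≤ q ^ q * u := by
    calc B ^ q ≤ (q * u ^ (1/q)) ^ q :=
          Real.rpow_le_rpow (by linarith) hlogu hqpos.le
    _ = q ^ q * (u ^ (1/q)) ^ q := Real.mul_rpow hqpos.le (Real.rpow_nonneg hu0.le _)
    _ = q ^ q * u := by
        rw [← Real.rpow_mul hu0.le, one_div_mul_cancel hqpos.ne', Real.rpow_one]
  have hBq1 : B ^ (q - 1) ≤ B ^ q :=
    Real.rpow_le_rpow_of_exponent_le hB1 (by linarith)
  -- mean value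
  have hmvt := rpow_mvt_aux hA1 hAB hq
  -- now combine
  have hqq : (0 : ℝ) < q ^ q := Real.rpow_pos_of_pos hqpos _
  have hBApos : 0 ≤ B - A := by linarith
  have hBq0 : 0 ≤ B ^ (q - 1) := Real.rpow_nonneg (by linarith) _
  -- q * B^(q-1) * (B - A) ≤ q * (q^q * u) * ((u-v)/v) ≤ 2 * q * q^q
  have key : q * B ^ (q - 1) * (B - A) ≤ 2 * q * q ^ q := by
    have h1 : B ^ (q - 1) * (B - A) ≤ (q ^ q * u) * ((u - v) / v) := by
      have := mul_le_mul (hBq1.trans hBq) hBA hBApos (by positivity)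
      linarith
    have h2 : (q ^ q * u) * ((u - v) / v) ≤ 2 * q ^ q := by
      have h3 : u * (u - v) ≤ 2 * v := by nlinarith [sub_nonneg.2 hvu]
      have h4 : u * ((u - v) / v) ≤ 2 := by
        rw [← mul_div_assoc, div_le_iff₀ hv0]; linarith
      calc (q ^ q * u) * ((u - v) / v) = q ^ q * (u * ((u - v) / v)) := by ring
      _ ≤ q ^ q * 2 := mul_le_mul_of_nonneg_left h4 hqq.le
      _ = 2 * q ^ q := by ring
    calc q * B ^ (q - 1) * (B - A) = q * (B ^ (q - 1) * (B - A)) := by ring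
    _ ≤ q * ((q ^ q * u) * ((u - v) / v)) := mul_le_mul_of_nonneg_left h1 hqpos.le
    _ ≤ q * (2 * q ^ q) := mul_le_mul_of_nonneg_left h2 hqpos.le
    _ = 2 * q * q ^ q := by ring
  calc |B ^ q - A ^ q| ≤ q * B ^ (q - 1) * (B - A) := hmvt
  _ ≤ 2 * q * q ^ q := key

/-- **Moderateness of the weight `ω_{n,r,s}(x) = e^{−r(log(1+|x|))^q}`,
`q = 1/(1−2s)`, `0 ≤ s < 1/2`**: there are `R ≥ 2` and positive constants
`c`, `C` such that `C⁻¹ ω(x) ≤ ω(x+y) ≤ C ω(x)` whenever `Rc ≤ |x| ≤ c/|y|`. -/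
theorem weight_moderate_log
    (n : ℕ) (hn : 1 ≤ n) (s : ℝ) (hs0 : 0 ≤ s) (hs : s < 1 / 2)
    (q : ℝ) (hq : q = 1 / (1 - 2 * s))
    (r : ℝ) (hr : 0 ≤ r) (ω : EuclideanSpace ℝ (Fin n) → ℝ)
    (hω : ω = fun x => Real.exp (-(r * Real.log (1 + ‖x‖) ^ q))) :
    ∃ R c C : ℝ, 2 ≤ R ∧ 0 < c ∧ 0 < C ∧
      ∀ x y : EuclideanSpace ℝ (Fin n), R * c ≤ ‖x‖ → ‖x‖ * ‖y‖ ≤ c →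
        C⁻¹ * ω x ≤ ω (x + y) ∧ ω (x + y) ≤ C * ω x := by
  have hq1 : 1 ≤ q := by
    have h1 : 0 < 1 - 2 * s := by linarith
    rw [hq]
    rw [le_div_iff₀ h1]
    linarith
  refine ⟨4, 1, Real.exp (r * (2 * q * q ^ q)), by norm_num, one_pos, Real.exp_pos _, ?_⟩
  intro x y hx hxy
  have hX : (4 : ℝ) ≤ ‖x‖ := by linarith
  have hX0 : (0 : ℝ) < ‖x‖ := by linarith
  have hy : ‖y‖ ≤ 1 / ‖x‖ := by
    rw [le_div_iff₀ hX0]; linarith [mul_comm ‖x‖ ‖y‖ ▸ hxy]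
  have hy4 : ‖y‖ ≤ 1 / 4 := by
    calc ‖y‖ ≤ 1 / ‖x‖ := hy
    _ ≤ 1 / 4 := by apply one_div_le_one_div_of_le <;> linarith
  have hxy_lb : ‖x‖ - ‖y‖ ≤ ‖x + y‖ := by
    have h : ‖x‖ ≤ ‖x + y‖ + ‖y‖ := by simpa using norm_sub_le (x + y) y
    linarith
  have hxy_ub : ‖x + y‖ ≤ ‖x‖ + ‖y‖ := norm_add_le x y
  -- key bound on the difference
  have key : |Real.log (1 + ‖x + y‖) ^ q - Real.log (1 + ‖x‖) ^ q| ≤ 2 * q * q ^ q := by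
    rcases le_total ‖x + y‖ ‖x‖ with h | h
    · -- v = 1 + ‖x+y‖, u = 1 + ‖x‖
      have h3 : (3 : ℝ) ≤ 1 + ‖x + y‖ := by linarith
      have huv : ((1 + ‖x‖) - (1 + ‖x + y‖)) * (1 + ‖x + y‖) ≤ 2 := by
        have h1 : (1 + ‖x‖) - (1 + ‖x + y‖) ≤ ‖y‖ := by linarith
        have h2 : 1 + ‖x + y‖ ≤ (3/2) * ‖x‖ := by linarith
        have h4 : ‖y‖ * ‖x‖ ≤ 1 := by linarith [mul_comm ‖x‖ ‖y‖ ▸ hxy]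
        nlinarith [norm_nonneg y, sub_nonneg.2 h]
      have := log_rpow_diff_bound hq1 h3 (by linarith) (by linarith) huv
      rw [abs_sub_comm] at this
      exact this
    · have h3 : (3 : ℝ) ≤ 1 + ‖x‖ := by linarith
      have huv : ((1 + ‖x + y‖) - (1 + ‖x‖)) * (1 + ‖x‖) ≤ 2 := by
        have h1 : (1 + ‖x + y‖) - (1 + ‖x‖) ≤ ‖y‖ := by linarith
        have h4 : ‖y‖ * ‖x‖ ≤ 1 := by linarith [mul_comm ‖x‖ ‖y‖ ▸ hxy]
        nlinarith [norm_nonneg y, sub_nonneg.2 h]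
      exact log_rpow_diff_bound hq1 h3 (by linarith) (by linarith) huv
  set A := Real.log (1 + ‖x‖) ^ q
  set B := Real.log (1 + ‖x + y‖) ^ q
  have h1 : r * (B - A) ≤ r * (2 * q * q ^ q) :=
    mul_le_mul_of_nonneg_left ((le_abs_self _).trans key) hr
  have h2 : r * (A - B) ≤ r * (2 * q * q ^ q) := by
    have := (neg_le_abs (B - A)).trans key
    have : A - B ≤ 2 * q * q ^ q := by linarith
    exact mul_le_mul_of_nonneg_left this hr
  subst hω
  constructor
  · rw [← Real.exp_neg, ← Real.exp_add, Real.exp_le_exp]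
    nlinarith [h1]
  · rw [← Real.exp_add, Real.exp_le_exp]
    nlinarith [h2]
end
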